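/- arXiv:math/0212209 — 9 statements merged into one kernel-verified Lean document; each statement's English description precedes it below -/
import Mathlib

section
/- For any polynomials L, M in C[T] of degree at most 1, one has (1/γ) H(L) H(M) ≤ H(L·M) ≤ 2 H(L) H(M), where γ = (1+√5)/2 is the golden ratio. -/
open Polynomial

/-- Height of a complex polynomial of degree at most 2:
the maximum of the absolute values of its coefficients. -/
noncomputable def H2 (P : Polynomial ℂ) : ℝ :=
  max ‖P.coeff 0‖ (max ‖P.coeff 1‖ ‖P.coeff 2‖)

/-- The golden ratio. -/
noncomputable def gr : ℝ := (1 + Real.sqrt 5) / 2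

lemma sqrt5_sq : Real.sqrt 5 * Real.sqrt 5 = 5 :=
  Real.mul_self_sqrt (by norm_num)

lemma sqrt5_ge : (2:ℝ) ≤ Real.sqrt 5 := by
  nlinarith [sqrt5_sq, Real.sqrt_nonneg 5]

lemma gr_ge_one : (1:ℝ) ≤ gr := by
  unfold gr; nlinarith [sqrt5_ge]

lemma key (A B C D h : ℝ) (hA : 0 ≤ A) (hB : 0 ≤ B) (hC : 0 ≤ C) (hD : 0 ≤ D)
    (h1 : A*C ≤ h) (h2 : B*D ≤ h) (h3 : A*D ≤ h + B*C) (h4 : B*C ≤ h + A*D) :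
    max A B * max C D ≤ gr * h := by
  have hh : 0 ≤ h := le_trans (mul_nonneg hA hC) h1
  have hg := gr_ge_one
  have hgsq : gr * gr = gr + 1 := by unfold gr; nlinarith [sqrt5_sq]
  have hAD : A*D ≤ gr*h := by
    by_contra hcon
    push_neg at hcon
    have hBC : A*D - h ≤ B*C := by linarith
    have hprod : (A*D) * (B*C) ≤ h * h := by
      calc (A*D)*(B*C) = (A*C)*(B*D) := by ring
        _ ≤ h * h := mul_le_mul h1 h2 (mul_nonneg hB hD) hh
    have ht0 : 0 ≤ A*D := mul_nonneg hA hD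
    have hf1 : 0 < A*D - gr*h := by nlinarith
    have hf2 : 0 < A*D - (1-gr)*h := by nlinarith
    nlinarith [mul_pos hf1 hf2, mul_le_mul_of_nonneg_left hBC ht0, hprod, hgsq]
  have hBCb : B*C ≤ gr*h := by
    by_contra hcon
    push_neg at hcon
    have hAD' : B*C - h ≤ A*D := by linarith
    have hprod : (B*C) * (A*D) ≤ h * h := by
      calc (B*C)*(A*D) = (A*C)*(B*D) := by ring
        _ ≤ h * h := mul_le_mul h1 h2 (mul_nonneg hB hD) hh
    have ht0 : 0 ≤ B*C := mul_nonneg hB hC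
    have hf1 : 0 < B*C - gr*h := by nlinarith
    have hf2 : 0 < B*C - (1-gr)*h := by nlinarith
    nlinarith [mul_pos hf1 hf2, mul_le_mul_of_nonneg_left hAD' ht0, hprod, hgsq]
  have hAC : A*C ≤ gr*h := le_trans h1 (le_mul_of_one_le_left hh hg)
  have hBD : B*D ≤ gr*h := le_trans h2 (le_mul_of_one_le_left hh hg)
  rcases le_total A B with hab | hab <;> rcases le_total C D with hcd | hcd <;>
    simp [max_eq_left, max_eq_right, hab, hcd] <;> assumption

theorem gelfond_degree_one (L M : Polynomial ℂ)
    (hL : L.degree ≤ 1) (hM : M.degree ≤ 1) :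
    (1 / gr) * H2 L * H2 M ≤ H2 (L * M) ∧ H2 (L * M) ≤ 2 * H2 L * H2 M := by
  have hL2 : L.coeff 2 = 0 := coeff_eq_zero_of_degree_lt (lt_of_le_of_lt hL (by decide))
  have hM2 : M.coeff 2 = 0 := coeff_eq_zero_of_degree_lt (lt_of_le_of_lt hM (by decide))
  set a := L.coeff 0
  set b := L.coeff 1
  set c := M.coeff 0
  set d := M.coeff 1
  have hc0 : (L*M).coeff 0 = a * c := by simp [mul_coeff_zero]; rfl
  have hc1 : (L*M).coeff 1 = a * d + b * c := by
    rw [coeff_mul, Finset.Nat.sum_antidiagonal_eq_sum_range_succ_mk]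
    simp [Finset.sum_range_succ]; rfl
  have hc2 : (L*M).coeff 2 = b * d := by
    rw [coeff_mul, Finset.Nat.sum_antidiagonal_eq_sum_range_succ_mk]
    simp [Finset.sum_range_succ, hL2, hM2]; rfl
  set A := ‖a‖
  set B := ‖b‖
  set C := ‖c‖
  set D := ‖d‖
  have hA : 0 ≤ A := norm_nonneg _
  have hB : 0 ≤ B := norm_nonneg _
  have hC : 0 ≤ C := norm_nonneg _
  have hD : 0 ≤ D := norm_nonneg _
  have hHL : H2 L = max A B := by
    unfold H2; rw [hL2]; simp [max_eq_left hB]; rfl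
  have hHM : H2 M = max C D := by
    unfold H2; rw [hM2]; simp [max_eq_left hD]; rfl
  set h := H2 (L*M) with hhdef
  have hh1 : ‖a*c‖ ≤ h := by
    rw [hhdef]; unfold H2; rw [hc0]; exact le_max_left _ _
  have hh2 : ‖b*d‖ ≤ h := by
    rw [hhdef]; unfold H2; rw [hc2]; exact le_trans (le_max_right _ _) (le_max_right _ _)
  have hh3 : ‖a*d + b*c‖ ≤ h := by
    rw [hhdef]; unfold H2; rw [hc1]; exact le_trans (le_max_left _ _) (le_max_right _ _)
  rw [norm_mul] at hh1 hh2
  have htri1 : A*D ≤ h + B*C := by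
    have := norm_sub_le (a*d + b*c) (b*c)
    simp only [add_sub_cancel_right] at this
    calc A*D = ‖a*d‖ := (norm_mul _ _).symm
      _ ≤ ‖a*d+b*c‖ + ‖b*c‖ := by
          simpa [norm_mul] using this
      _ ≤ h + B*C := by rw [norm_mul] at *; exact add_le_add hh3 le_rfl
  have htri2 : B*C ≤ h + A*D := by
    have := norm_sub_le (a*d + b*c) (a*d)
    calc B*C = ‖b*c‖ := (norm_mul _ _).symm
      _ ≤ ‖a*d+b*c‖ + ‖a*d‖ := by
          have h' := norm_sub_le (a*d + b*c) (a*d)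
          simp only [add_sub_cancel_left] at h'
          simpa [norm_mul] using h'
      _ ≤ h + A*D := by rw [norm_mul] at *; exact add_le_add hh3 le_rfl
  have hkey := key A B C D h hA hB hC hD hh1 hh2 htri1 htri2
  have hgpos : 0 < gr := lt_of_lt_of_le one_pos gr_ge_one
  constructor
  · rw [hHL, hHM]
    rw [div_mul_eq_mul_div, div_mul_eq_mul_div, div_le_iff₀ hgpos]
    calc 1 * max A B * max C D = max A B * max C D := by ring
      _ ≤ gr * h := hkey
      _ = h * gr := by ring
  · rw [hHL, hHM]
    have hh : 0 ≤ h := le_trans (mul_nonneg hA hC) hh1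
    have e1 : A ≤ max A B := le_max_left _ _
    have e2 : B ≤ max A B := le_max_right _ _
    have e3 : C ≤ max C D := le_max_left _ _
    have e4 : D ≤ max C D := le_max_right _ _
    rw [hhdef]
    unfold H2
    rw [hc0, hc1, hc2]
    refine max_le ?_ (max_le ?_ ?_)
    · rw [norm_mul]
      nlinarith [mul_le_mul e1 e3 hC (le_trans hA e1)]
    · calc ‖a*d+b*c‖ ≤ ‖a*d‖ + ‖b*c‖ := norm_add_le _ _
        _ = A*D + B*C := by rw [norm_mul, norm_mul]
        _ ≤ 2 * max A B * max C D := by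
            nlinarith [mul_le_mul e1 e4 hD (le_trans hA e1), mul_le_mul e2 e3 hC (le_trans hB e2)]
    · rw [norm_mul]
      nlinarith [mul_le_mul e2 e4 hD (le_trans hB e2)]
end

section
/- Let P, Q be nonzero polynomials in Z[T] with deg(P) ≤ 1 and deg(Q) ≤ 1. Then for any complex number ξ, |Res(P,Q)| ≤ H(P) H(Q) ( |P(ξ)|/H(P) + |Q(ξ)|/H(Q) ), i.e., |Res(P,Q)| ≤ H(Q)|P(ξ)| + H(P)|Q(ξ)|. -/
open Polynomial

/-- Height of an integer polynomial of degree at most 1, as a real number. -/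
noncomputable def HZ1 (P : Polynomial ℤ) : ℝ :=
  max |(P.coeff 0 : ℝ)| |(P.coeff 1 : ℝ)|

/-- The resultant of two polynomials of degree at most 1,
computed as the Sylvester determinant with respect to degrees 1 and 1. -/
def res11 (P Q : Polynomial ℤ) : ℤ :=
  P.coeff 1 * Q.coeff 0 - P.coeff 0 * Q.coeff 1

theorem resultant_bound_deg_one_one (P Q : Polynomial ℤ)
    (hP0 : P ≠ 0) (hQ0 : Q ≠ 0) (hP : P.degree ≤ 1) (hQ : Q.degree ≤ 1) (ξ : ℂ) :
    |(res11 P Q : ℝ)| ≤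
      HZ1 Q * ‖aeval ξ P‖ + HZ1 P * ‖aeval ξ Q‖ := by
  have hPe : (aeval ξ P : ℂ) = (P.coeff 1 : ℂ) * ξ + (P.coeff 0 : ℂ) := by
    conv_lhs => rw [Polynomial.eq_X_add_C_of_degree_le_one hP]
    simp
  have hQe : (aeval ξ Q : ℂ) = (Q.coeff 1 : ℂ) * ξ + (Q.coeff 0 : ℂ) := by
    conv_lhs => rw [Polynomial.eq_X_add_C_of_degree_le_one hQ]
    simp
  have key : ((res11 P Q : ℤ) : ℂ)
      = (P.coeff 1 : ℂ) * aeval ξ Q - (Q.coeff 1 : ℂ) * aeval ξ P := by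
    rw [hPe, hQe]
    push_cast [res11]
    ring
  have h1 : |(res11 P Q : ℝ)| = ‖((res11 P Q : ℤ) : ℂ)‖ := by
    rw [Complex.norm_intCast]
  rw [h1, key]
  calc ‖(P.coeff 1 : ℂ) * aeval ξ Q - (Q.coeff 1 : ℂ) * aeval ξ P‖
      ≤ ‖(P.coeff 1 : ℂ) * aeval ξ Q‖
        + ‖(Q.coeff 1 : ℂ) * aeval ξ P‖ := by
        exact norm_sub_le _ _
    _ = |(P.coeff 1 : ℝ)| * ‖aeval ξ Q‖
        + |(Q.coeff 1 : ℝ)| * ‖aeval ξ P‖ := by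
        rw [norm_mul, norm_mul, Complex.norm_intCast, Complex.norm_intCast]
    _ ≤ HZ1 P * ‖aeval ξ Q‖ + HZ1 Q * ‖aeval ξ P‖ := by
        gcongr
        · exact le_max_right _ _
        · exact le_max_right _ _
    _ = HZ1 Q * ‖aeval ξ P‖ + HZ1 P * ‖aeval ξ Q‖ := by ring
end

section
/- Let P, Q be nonzero polynomials in Z[T] with deg(P) ≤ 1 and deg(Q) ≤ 2. Then for any complex number ξ, |Res(P,Q)| ≤ H(P)² H(Q) ( 3 |P(ξ)|/H(P) + |Q(ξ)|/H(Q) ), where Res is the resultant with respect to degrees 1 and 2. -/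
open Polynomial

/-- Height of an integer polynomial of degree at most 2, as a real number. -/
noncomputable def HZ2 (P : Polynomial ℤ) : ℝ :=
  max |(P.coeff 0 : ℝ)| (max |(P.coeff 1 : ℝ)| |(P.coeff 2 : ℝ)|)

/-- The resultant of two polynomials of degrees at most 1 and 2,
computed as the Sylvester determinant with respect to degree bounds 1 and 2. -/
def res12 (P Q : Polynomial ℤ) : ℤ :=
  Matrix.det !![P.coeff 1, P.coeff 0, 0;
                0, P.coeff 1, P.coeff 0;
                Q.coeff 2, Q.coeff 1, Q.coeff 0]

theorem hApoly (P : Polynomial ℤ) (hP : P.degree ≤ 1) (ξ : ℂ) :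
    (aeval ξ P) = (P.coeff 0 : ℂ) + (P.coeff 1 : ℂ) * ξ := by
  have h : P.natDegree < 2 := by
    have := Polynomial.natDegree_le_of_degree_le hP; exact Nat.lt_succ_of_le this
  rw [aeval_eq_sum_range' h]
  simp [Finset.sum_range_succ, zsmul_eq_mul]

theorem hBpoly (Q : Polynomial ℤ) (hQ : Q.degree ≤ 2) (ξ : ℂ) :
    (aeval ξ Q) = (Q.coeff 0 : ℂ) + (Q.coeff 1 : ℂ) * ξ + (Q.coeff 2 : ℂ) * ξ^2 := by
  have h : Q.natDegree < 3 := by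
    have := Polynomial.natDegree_le_of_degree_le hQ; exact Nat.lt_succ_of_le this
  rw [aeval_eq_sum_range' h]
  simp [Finset.sum_range_succ, zsmul_eq_mul]

theorem res12_eq (P Q : Polynomial ℤ) :
    res12 P Q = P.coeff 1 ^ 2 * Q.coeff 0 - P.coeff 1 * P.coeff 0 * Q.coeff 1
      + Q.coeff 2 * P.coeff 0 ^ 2 := by
  simp [res12, Matrix.det_fin_three]; ring

theorem one_le_HZ2 (P : Polynomial ℤ) (hP0 : P ≠ 0) (hP : P.degree ≤ 2) : 1 ≤ HZ2 P := by
  have hn : P.natDegree ≤ 2 := by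
    have := Polynomial.natDegree_le_of_degree_le hP
    exact this
  have hl : P.coeff P.natDegree ≠ 0 := Polynomial.leadingCoeff_ne_zero.mpr hP0
  have h1 : (1 : ℝ) ≤ |(P.coeff P.natDegree : ℝ)| := by
    have := Int.one_le_abs hl
    calc (1:ℝ) ≤ |(P.coeff P.natDegree)| := by exact_mod_cast this
    _ = _ := by push_cast [Int.cast_abs]; rfl
  interval_cases h : P.natDegree <;> unfold HZ2 <;>
    [exact le_trans h1 (le_max_left _ _);
     exact le_trans h1 (le_trans (le_max_left _ _) (le_max_right _ _));
     exact le_trans h1 (le_trans (le_max_right _ _) (le_max_right _ _))]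

set_option maxHeartbeats 1000000 in
theorem resultant_bound_deg_one_two (P Q : Polynomial ℤ)
    (hP0 : P ≠ 0) (hQ0 : Q ≠ 0) (hP : P.degree ≤ 1) (hQ : Q.degree ≤ 2) (ξ : ℂ) :
    |(res12 P Q : ℝ)| ≤
      HZ2 P ^ 2 * HZ2 Q *
        (3 * ‖aeval ξ P‖ / HZ2 P + ‖aeval ξ Q‖ / HZ2 Q) := by
  have hHP : 1 ≤ HZ2 P := one_le_HZ2 P hP0 (le_trans hP (by norm_num))
  have hHQ : 1 ≤ HZ2 Q := one_le_HZ2 Q hQ0 hQ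
  set HP := HZ2 P
  set HQ := HZ2 Q
  set a := ‖aeval ξ P‖ with ha
  set b := ‖aeval ξ Q‖ with hb
  set x := ‖ξ‖ with hx
  have ha0 : 0 ≤ a := norm_nonneg _
  have hb0 : 0 ≤ b := norm_nonneg _
  have hx0 : 0 ≤ x := norm_nonneg _
  have hp0 : |(P.coeff 0 : ℝ)| ≤ HP := le_max_left _ _
  have hp1 : |(P.coeff 1 : ℝ)| ≤ HP := le_trans (le_max_left _ _) (le_max_right _ _)
  have hq0 : |(Q.coeff 0 : ℝ)| ≤ HQ := le_max_left _ _
  have hq1 : |(Q.coeff 1 : ℝ)| ≤ HQ := le_trans (le_max_left _ _) (le_max_right _ _)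
  have hq2 : |(Q.coeff 2 : ℝ)| ≤ HQ := le_trans (le_max_right _ _) (le_max_right _ _)
  -- it suffices to prove the simpler bound
  have hsuff : |(res12 P Q : ℝ)| ≤ 3 * HP * HQ * a + HP ^ 2 * b → |(res12 P Q : ℝ)| ≤
      HP ^ 2 * HQ * (3 * a / HP + b / HQ) := by
    intro h
    have : HP ^ 2 * HQ * (3 * a / HP + b / HQ) = 3 * HP * HQ * a + HP ^ 2 * b := by
      field_simp
    rw [this]; exact h
  apply hsuff
  -- complex abs of the resultant
  have hres : |(res12 P Q : ℝ)| = ‖((res12 P Q : ℤ) : ℂ)‖ := by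
    rw [Complex.norm_intCast]
  rw [hres]
  have hA := hApoly P hP ξ
  have hB := hBpoly Q hQ ξ
  set p0 := (P.coeff 0 : ℂ)
  set p1 := (P.coeff 1 : ℂ)
  set q0 := (Q.coeff 0 : ℂ)
  set q1 := (Q.coeff 1 : ℂ)
  set q2 := (Q.coeff 2 : ℂ)
  have hres12 : ((res12 P Q : ℤ) : ℂ) = p1 ^ 2 * q0 - p1 * p0 * q1 + q2 * p0 ^ 2 := by
    rw [res12_eq]; push_cast; ring
  -- abs of complex casts
  have ap0 : ‖p0‖ = |(P.coeff 0 : ℝ)| := by rw [Complex.norm_intCast]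
  have ap1 : ‖p1‖ = |(P.coeff 1 : ℝ)| := by rw [Complex.norm_intCast]
  have aq0 : ‖q0‖ = |(Q.coeff 0 : ℝ)| := by rw [Complex.norm_intCast]
  have aq1 : ‖q1‖ = |(Q.coeff 1 : ℝ)| := by rw [Complex.norm_intCast]
  have aq2 : ‖q2‖ = |(Q.coeff 2 : ℝ)| := by rw [Complex.norm_intCast]
  rcases le_or_gt x 1 with hx1 | hx1
  · -- |ξ| ≤ 1 : use Res = (-(p1 q2) ξ - (p1 q1 - p0 q2)) A + p1² B
    have hid : ((res12 P Q : ℤ) : ℂ) =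
        (-(p1 * q2) * ξ - (p1 * q1 - p0 * q2)) * (aeval ξ P) + p1 ^ 2 * (aeval ξ Q) := by
      rw [hres12, hA, hB]; ring
    rw [hid]
    calc ‖(-(p1 * q2) * ξ - (p1 * q1 - p0 * q2)) * (aeval ξ P) + p1 ^ 2 * (aeval ξ Q)‖
        ≤ ‖(-(p1 * q2) * ξ - (p1 * q1 - p0 * q2)) * (aeval ξ P)‖
          + ‖p1 ^ 2 * (aeval ξ Q)‖ := norm_add_le _ _
      _ = ‖-(p1 * q2) * ξ - (p1 * q1 - p0 * q2)‖ * a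
          + ‖p1‖ ^ 2 * b := by rw [norm_mul, norm_mul, norm_pow]
      _ ≤ 3 * HP * HQ * a + HP ^ 2 * b := by
          have h1 : ‖-(p1 * q2) * ξ - (p1 * q1 - p0 * q2)‖ ≤ 3 * HP * HQ := by
            calc ‖-(p1 * q2) * ξ - (p1 * q1 - p0 * q2)‖
                ≤ ‖-(p1 * q2) * ξ‖ + ‖p1 * q1 - p0 * q2‖ :=
                  norm_sub_le _ _
              _ ≤ ‖-(p1 * q2) * ξ‖ + (‖p1 * q1‖ + ‖p0 * q2‖) :=
                  by gcongr; exact norm_sub_le _ _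
              _ = |(P.coeff 1 : ℝ)| * |(Q.coeff 2 : ℝ)| * x + (|(P.coeff 1 : ℝ)| * |(Q.coeff 1 : ℝ)|
                  + |(P.coeff 0 : ℝ)| * |(Q.coeff 2 : ℝ)|) := by
                  simp [map_mul, ap0, ap1, aq1, aq2, hx]
              _ ≤ HP * HQ * 1 + (HP * HQ + HP * HQ) := by
                  gcongr <;> first | exact abs_nonneg _ | positivity | assumption
              _ = 3 * HP * HQ := by ring
          have h2 : ‖p1‖ ^ 2 ≤ HP ^ 2 := by
            rw [ap1]; gcongr
          gcongr
  · -- |ξ| ≥ 1 : use ξ² Res = (ξ (p1 q0 - p0 q1) - p0 q0) A + p0² B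
      have hid : ξ ^ 2 * ((res12 P Q : ℤ) : ℂ) =
          (ξ * (p1 * q0 - p0 * q1) - p0 * q0) * (aeval ξ P) + p0 ^ 2 * (aeval ξ Q) := by
        rw [hres12, hA, hB]; ring
      have key : x ^ 2 * ‖((res12 P Q : ℤ) : ℂ)‖
          ≤ x ^ 2 * (3 * HP * HQ * a + HP ^ 2 * b) := by
        calc x ^ 2 * ‖((res12 P Q : ℤ) : ℂ)‖
            = ‖ξ ^ 2 * ((res12 P Q : ℤ) : ℂ)‖ := by rw [norm_mul, norm_pow]
          _ = ‖(ξ * (p1 * q0 - p0 * q1) - p0 * q0) * (aeval ξ P)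
              + p0 ^ 2 * (aeval ξ Q)‖ := by rw [hid]
          _ ≤ ‖ξ * (p1 * q0 - p0 * q1) - p0 * q0‖ * a
              + ‖p0‖ ^ 2 * b := by
              refine le_trans (norm_add_le _ _) ?_
              rw [norm_mul, norm_mul, norm_pow]
          _ ≤ (x * (2 * HP * HQ) + HP * HQ) * a + HP ^ 2 * b := by
              have h1 : ‖ξ * (p1 * q0 - p0 * q1) - p0 * q0‖
                  ≤ x * (2 * HP * HQ) + HP * HQ := by
                calc ‖ξ * (p1 * q0 - p0 * q1) - p0 * q0‖
                    ≤ ‖ξ * (p1 * q0 - p0 * q1)‖ + ‖p0 * q0‖ :=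
                      norm_sub_le _ _
                  _ ≤ x * (‖p1 * q0‖ + ‖p0 * q1‖)
                      + ‖p0 * q0‖ := by
                      rw [norm_mul]; gcongr; exact norm_sub_le _ _
                  _ = x * (|(P.coeff 1 : ℝ)| * |(Q.coeff 0 : ℝ)| + |(P.coeff 0 : ℝ)| * |(Q.coeff 1 : ℝ)|)
                      + |(P.coeff 0 : ℝ)| * |(Q.coeff 0 : ℝ)| := by
                      simp [map_mul, ap0, ap1, aq0, aq1]
                  _ ≤ x * (HP * HQ + HP * HQ) + HP * HQ := by
                      gcongr <;> first | exact abs_nonneg _ | positivity | assumption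
                  _ = x * (2 * HP * HQ) + HP * HQ := by ring
              have h2 : ‖p0‖ ^ 2 ≤ HP ^ 2 := by
                rw [ap0]; gcongr
              gcongr
          _ ≤ x ^ 2 * (3 * HP * HQ * a + HP ^ 2 * b) := by
              have hHPQ : (0:ℝ) ≤ HP * HQ * a := by positivity
              have hPb : (0:ℝ) ≤ HP ^ 2 * b := by positivity
              have hxx : x ≤ x ^ 2 := by nlinarith
              have h11 : (1:ℝ) ≤ x ^ 2 := by nlinarith
              linarith [mul_le_mul_of_nonneg_left hxx hHPQ,
                mul_le_mul_of_nonneg_left h11 hHPQ,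
                mul_le_mul_of_nonneg_left h11 hPb]
      exact le_of_mul_le_mul_left key (by positivity)
end

section
/- Let P, Q be nonzero polynomials in Z[T] with deg(P) ≤ 2 and deg(Q) ≤ 2. Then for any complex number ξ, |Res(P,Q)| ≤ H(P)² H(Q)² ( 6 |P(ξ)|/H(P) + 6 |Q(ξ)|/H(Q) ). -/
open Polynomial

/-- The resultant of two polynomials of degree at most 2,
computed as the Sylvester determinant with respect to degree bounds 2 and 2. -/
def res22 (P Q : Polynomial ℤ) : ℤ :=
  Matrix.det !![P.coeff 2, P.coeff 1, P.coeff 0, 0;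
                0, P.coeff 2, P.coeff 1, P.coeff 0;
                Q.coeff 2, Q.coeff 1, Q.coeff 0, 0;
                0, Q.coeff 2, Q.coeff 1, Q.coeff 0]

lemma HZ2_pos (P : Polynomial ℤ) (hP0 : P ≠ 0) (hP : P.degree ≤ 2) : 0 < HZ2 P := by
  rcases lt_or_ge 0 (HZ2 P) with h | h
  · exact h
  · exfalso
    apply hP0
    have h0 : |(P.coeff 0 : ℝ)| ≤ 0 := le_trans (le_max_left _ _) h
    have h1 : |(P.coeff 1 : ℝ)| ≤ 0 := le_trans (le_trans (le_max_left _ _) (le_max_right _ _)) h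
    have h2 : |(P.coeff 2 : ℝ)| ≤ 0 := le_trans (le_trans (le_max_right _ _) (le_max_right _ _)) h
    have e0 : P.coeff 0 = 0 := by
      have := abs_nonneg (P.coeff 0 : ℝ); exact_mod_cast abs_eq_zero.mp (le_antisymm h0 this)
    have e1 : P.coeff 1 = 0 := by
      have := abs_nonneg (P.coeff 1 : ℝ); exact_mod_cast abs_eq_zero.mp (le_antisymm h1 this)
    have e2 : P.coeff 2 = 0 := by
      have := abs_nonneg (P.coeff 2 : ℝ); exact_mod_cast abs_eq_zero.mp (le_antisymm h2 this)
    ext n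
    match n with
    | 0 => simpa using e0
    | 1 => simpa using e1
    | 2 => simpa using e2
    | (k+3) =>
      rw [Polynomial.coeff_eq_zero_of_degree_lt, Polynomial.coeff_zero]
      refine lt_of_le_of_lt hP ?_
      exact_mod_cast by
        have : (2 : ℕ) < k + 3 := by omega
        exact_mod_cast Nat.cast_lt.mpr this

set_option maxHeartbeats 1000000 in
theorem resultant_bound_deg_two_two (P Q : Polynomial ℤ)
    (hP0 : P ≠ 0) (hQ0 : Q ≠ 0) (hP : P.degree ≤ 2) (hQ : Q.degree ≤ 2) (ξ : ℂ) :
    |(res22 P Q : ℝ)| ≤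
      HZ2 P ^ 2 * HZ2 Q ^ 2 *
        (6 * ‖aeval ξ P‖ / HZ2 P + 6 * ‖aeval ξ Q‖ / HZ2 Q) := by
  have hHP : 0 < HZ2 P := HZ2_pos P hP0 hP
  have hHQ : 0 < HZ2 Q := HZ2_pos Q hQ0 hQ
  set HP := HZ2 P with hHPdef
  set HQ := HZ2 Q with hHQdef
  set a0 : ℂ := ((P.coeff 0 : ℤ) : ℂ) with ha0
  set a1 : ℂ := ((P.coeff 1 : ℤ) : ℂ) with ha1
  set a2 : ℂ := ((P.coeff 2 : ℤ) : ℂ) with ha2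
  set b0 : ℂ := ((Q.coeff 0 : ℤ) : ℂ) with hb0
  set b1 : ℂ := ((Q.coeff 1 : ℤ) : ℂ) with hb1
  set b2 : ℂ := ((Q.coeff 2 : ℤ) : ℂ) with hb2
  -- coefficient norm bounds
  have hna0 : ‖a0‖ ≤ HP := by
    rw [ha0, Complex.norm_intCast]; exact le_max_left _ _
  have hna1 : ‖a1‖ ≤ HP := by
    rw [ha1, Complex.norm_intCast]
    exact le_trans (le_max_left _ _) (le_max_right _ _)
  have hna2 : ‖a2‖ ≤ HP := by
    rw [ha2, Complex.norm_intCast]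
    exact le_trans (le_max_right _ _) (le_max_right _ _)
  have hnb0 : ‖b0‖ ≤ HQ := by
    rw [hb0, Complex.norm_intCast]; exact le_max_left _ _
  have hnb1 : ‖b1‖ ≤ HQ := by
    rw [hb1, Complex.norm_intCast]
    exact le_trans (le_max_left _ _) (le_max_right _ _)
  have hnb2 : ‖b2‖ ≤ HQ := by
    rw [hb2, Complex.norm_intCast]
    exact le_trans (le_max_right _ _) (le_max_right _ _)
  -- evaluations
  have hPn : P.natDegree < 3 := by
    exact Nat.lt_succ_of_le (Polynomial.natDegree_le_iff_degree_le.mpr hP)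
  have hQn : Q.natDegree < 3 := by
    exact Nat.lt_succ_of_le (Polynomial.natDegree_le_iff_degree_le.mpr hQ)
  have hA : (aeval ξ P : ℂ) = a0 + a1 * ξ + a2 * ξ ^ 2 := by
    rw [Polynomial.aeval_eq_sum_range' hPn]
    simp [Finset.sum_range_succ, ha0, ha1, ha2, zsmul_eq_mul]
  have hB : (aeval ξ Q : ℂ) = b0 + b1 * ξ + b2 * ξ ^ 2 := by
    rw [Polynomial.aeval_eq_sum_range' hQn]
    simp [Finset.sum_range_succ, hb0, hb1, hb2, zsmul_eq_mul]
  set A : ℂ := (aeval ξ P : ℂ)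
  set B : ℂ := (aeval ξ Q : ℂ)
  -- determinant expansion over ℤ
  have hdetZ : res22 P Q =
      P.coeff 0 ^ 2 * Q.coeff 2 ^ 2 + P.coeff 2 ^ 2 * Q.coeff 0 ^ 2
      - 2 * P.coeff 0 * P.coeff 2 * Q.coeff 0 * Q.coeff 2
      + P.coeff 0 * P.coeff 2 * Q.coeff 1 ^ 2
      + P.coeff 1 ^ 2 * Q.coeff 0 * Q.coeff 2
      - P.coeff 0 * P.coeff 1 * Q.coeff 1 * Q.coeff 2
      - P.coeff 1 * P.coeff 2 * Q.coeff 0 * Q.coeff 1 := by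
    rw [res22]
    simp [Matrix.det_succ_row_zero, Fin.sum_univ_succ, Fin.succAbove]
    ring
  have hdet : ((res22 P Q : ℤ) : ℂ) =
      a0 ^ 2 * b2 ^ 2 + a2 ^ 2 * b0 ^ 2 - 2 * a0 * a2 * b0 * b2
      + a0 * a2 * b1 ^ 2 + a1 ^ 2 * b0 * b2 - a0 * a1 * b1 * b2 - a1 * a2 * b0 * b1 := by
    rw [hdetZ]; push_cast [ha0, ha1, ha2, hb0, hb1, hb2]; ring
  -- cofactor-type quantities
  set c03 : ℂ := b2 * (a2 * b1 - a1 * b2) with hc03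
  set c13 : ℂ := a2 * b1 ^ 2 - a2 * b0 * b2 - a1 * b1 * b2 + a0 * b2 ^ 2 with hc13
  set c23 : ℂ := -(a2 * (a2 * b1 - a1 * b2)) with hc23
  set c33 : ℂ := a2 * a2 * b0 - a1 * a2 * b1 + a1 * a1 * b2 - a0 * a2 * b2 with hc33
  set d00 : ℂ := a2 * b0 ^ 2 - a1 * b0 * b1 + a0 * b1 ^ 2 - a0 * b0 * b2 with hd00
  set d10 : ℂ := -(b0 * (a1 * b0 - a0 * b1)) with hd10
  set d20 : ℂ := a1 * (a1 * b0 - a0 * b1) - a0 * (a2 * b0 - a0 * b2) with hd20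
  set d30 : ℂ := a0 * (a1 * b0 - a0 * b1) with hd30
  have habs : |(res22 P Q : ℝ)| = ‖((res22 P Q : ℤ) : ℂ)‖ := by
    rw [Complex.norm_intCast]
  -- cofactor bounds
  have hc03b : ‖c03‖ ≤ 2 * (HP * HQ ^ 2) := by
    rw [hc03]
    calc ‖b2 * (a2 * b1 - a1 * b2)‖ = ‖b2‖ * ‖a2 * b1 - a1 * b2‖ := norm_mul _ _
      _ ≤ HQ * (‖a2‖ * ‖b1‖ + ‖a1‖ * ‖b2‖) := by
          gcongr ?_ * ?_
          · exact (norm_sub_le _ _).trans (by rw [norm_mul, norm_mul])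
      _ ≤ HQ * (HP * HQ + HP * HQ) := by gcongr <;> positivity
      _ = 2 * (HP * HQ ^ 2) := by ring
  have hc13b : ‖c13‖ ≤ 4 * (HP * HQ ^ 2) := by
    rw [hc13]
    have h1 : ‖a2 * b1 ^ 2 - a2 * b0 * b2 - a1 * b1 * b2 + a0 * b2 ^ 2‖ ≤
        ‖a2‖ * ‖b1‖ ^ 2 + ‖a2‖ * ‖b0‖ * ‖b2‖ + ‖a1‖ * ‖b1‖ * ‖b2‖ + ‖a0‖ * ‖b2‖ ^ 2 := by
      calc ‖a2 * b1 ^ 2 - a2 * b0 * b2 - a1 * b1 * b2 + a0 * b2 ^ 2‖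
          ≤ ‖a2 * b1 ^ 2 - a2 * b0 * b2 - a1 * b1 * b2‖ + ‖a0 * b2 ^ 2‖ := norm_add_le _ _
        _ ≤ ‖a2 * b1 ^ 2 - a2 * b0 * b2‖ + ‖a1 * b1 * b2‖ + ‖a0 * b2 ^ 2‖ := by
            gcongr; exact norm_sub_le _ _
        _ ≤ ‖a2 * b1 ^ 2‖ + ‖a2 * b0 * b2‖ + ‖a1 * b1 * b2‖ + ‖a0 * b2 ^ 2‖ := by
            gcongr; exact norm_sub_le _ _
        _ = ‖a2‖ * ‖b1‖ ^ 2 + ‖a2‖ * ‖b0‖ * ‖b2‖ + ‖a1‖ * ‖b1‖ * ‖b2‖ + ‖a0‖ * ‖b2‖ ^ 2 := by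
            simp [norm_mul, norm_pow]
    refine h1.trans ?_
    have : ‖a2‖ * ‖b1‖ ^ 2 + ‖a2‖ * ‖b0‖ * ‖b2‖ + ‖a1‖ * ‖b1‖ * ‖b2‖ + ‖a0‖ * ‖b2‖ ^ 2
        ≤ HP * HQ ^ 2 + HP * HQ * HQ + HP * HQ * HQ + HP * HQ ^ 2 := by
      gcongr <;> first | positivity | assumption
    linarith
  have hc23b : ‖c23‖ ≤ 2 * (HP ^ 2 * HQ) := by
    rw [hc23, norm_neg]
    calc ‖a2 * (a2 * b1 - a1 * b2)‖ = ‖a2‖ * ‖a2 * b1 - a1 * b2‖ := norm_mul _ _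
      _ ≤ HP * (‖a2‖ * ‖b1‖ + ‖a1‖ * ‖b2‖) := by
          gcongr ?_ * ?_
          · exact (norm_sub_le _ _).trans (by rw [norm_mul, norm_mul])
      _ ≤ HP * (HP * HQ + HP * HQ) := by gcongr <;> positivity
      _ = 2 * (HP ^ 2 * HQ) := by ring
  have hc33b : ‖c33‖ ≤ 4 * (HP ^ 2 * HQ) := by
    rw [hc33]
    have h1 : ‖a2 * a2 * b0 - a1 * a2 * b1 + a1 * a1 * b2 - a0 * a2 * b2‖ ≤
        ‖a2‖ * ‖a2‖ * ‖b0‖ + ‖a1‖ * ‖a2‖ * ‖b1‖ + ‖a1‖ * ‖a1‖ * ‖b2‖ + ‖a0‖ * ‖a2‖ * ‖b2‖ := by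
      calc ‖a2 * a2 * b0 - a1 * a2 * b1 + a1 * a1 * b2 - a0 * a2 * b2‖
          ≤ ‖a2 * a2 * b0 - a1 * a2 * b1 + a1 * a1 * b2‖ + ‖a0 * a2 * b2‖ := norm_sub_le _ _
        _ ≤ ‖a2 * a2 * b0 - a1 * a2 * b1‖ + ‖a1 * a1 * b2‖ + ‖a0 * a2 * b2‖ := by
            gcongr; exact norm_add_le _ _
        _ ≤ ‖a2 * a2 * b0‖ + ‖a1 * a2 * b1‖ + ‖a1 * a1 * b2‖ + ‖a0 * a2 * b2‖ := by
            gcongr; exact norm_sub_le _ _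
        _ = ‖a2‖ * ‖a2‖ * ‖b0‖ + ‖a1‖ * ‖a2‖ * ‖b1‖ + ‖a1‖ * ‖a1‖ * ‖b2‖ + ‖a0‖ * ‖a2‖ * ‖b2‖ := by
            simp [norm_mul]
    refine h1.trans ?_
    have : ‖a2‖ * ‖a2‖ * ‖b0‖ + ‖a1‖ * ‖a2‖ * ‖b1‖ + ‖a1‖ * ‖a1‖ * ‖b2‖ + ‖a0‖ * ‖a2‖ * ‖b2‖
        ≤ HP * HP * HQ + HP * HP * HQ + HP * HP * HQ + HP * HP * HQ := by
      gcongr <;> first | positivity | assumption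
    nlinarith
  have hd00b : ‖d00‖ ≤ 4 * (HP * HQ ^ 2) := by
    rw [hd00]
    have h1 : ‖a2 * b0 ^ 2 - a1 * b0 * b1 + a0 * b1 ^ 2 - a0 * b0 * b2‖ ≤
        ‖a2‖ * ‖b0‖ ^ 2 + ‖a1‖ * ‖b0‖ * ‖b1‖ + ‖a0‖ * ‖b1‖ ^ 2 + ‖a0‖ * ‖b0‖ * ‖b2‖ := by
      calc ‖a2 * b0 ^ 2 - a1 * b0 * b1 + a0 * b1 ^ 2 - a0 * b0 * b2‖
          ≤ ‖a2 * b0 ^ 2 - a1 * b0 * b1 + a0 * b1 ^ 2‖ + ‖a0 * b0 * b2‖ := norm_sub_le _ _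
        _ ≤ ‖a2 * b0 ^ 2 - a1 * b0 * b1‖ + ‖a0 * b1 ^ 2‖ + ‖a0 * b0 * b2‖ := by
            gcongr; exact norm_add_le _ _
        _ ≤ ‖a2 * b0 ^ 2‖ + ‖a1 * b0 * b1‖ + ‖a0 * b1 ^ 2‖ + ‖a0 * b0 * b2‖ := by
            gcongr; exact norm_sub_le _ _
        _ = ‖a2‖ * ‖b0‖ ^ 2 + ‖a1‖ * ‖b0‖ * ‖b1‖ + ‖a0‖ * ‖b1‖ ^ 2 + ‖a0‖ * ‖b0‖ * ‖b2‖ := by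
            simp [norm_mul, norm_pow]
    refine h1.trans ?_
    have : ‖a2‖ * ‖b0‖ ^ 2 + ‖a1‖ * ‖b0‖ * ‖b1‖ + ‖a0‖ * ‖b1‖ ^ 2 + ‖a0‖ * ‖b0‖ * ‖b2‖
        ≤ HP * HQ ^ 2 + HP * HQ * HQ + HP * HQ ^ 2 + HP * HQ * HQ := by
      gcongr <;> first | positivity | assumption
    nlinarith
  have hd10b : ‖d10‖ ≤ 2 * (HP * HQ ^ 2) := by
    rw [hd10, norm_neg]
    calc ‖b0 * (a1 * b0 - a0 * b1)‖ = ‖b0‖ * ‖a1 * b0 - a0 * b1‖ := norm_mul _ _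
      _ ≤ HQ * (‖a1‖ * ‖b0‖ + ‖a0‖ * ‖b1‖) := by
          gcongr ?_ * ?_
          · exact (norm_sub_le _ _).trans (by rw [norm_mul, norm_mul])
      _ ≤ HQ * (HP * HQ + HP * HQ) := by gcongr <;> positivity
      _ = 2 * (HP * HQ ^ 2) := by ring
  have hd20b : ‖d20‖ ≤ 4 * (HP ^ 2 * HQ) := by
    rw [hd20]
    have h1 : ‖a1 * (a1 * b0 - a0 * b1) - a0 * (a2 * b0 - a0 * b2)‖ ≤
        ‖a1‖ * (‖a1‖ * ‖b0‖ + ‖a0‖ * ‖b1‖) + ‖a0‖ * (‖a2‖ * ‖b0‖ + ‖a0‖ * ‖b2‖) := by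
      calc ‖a1 * (a1 * b0 - a0 * b1) - a0 * (a2 * b0 - a0 * b2)‖
          ≤ ‖a1 * (a1 * b0 - a0 * b1)‖ + ‖a0 * (a2 * b0 - a0 * b2)‖ := norm_sub_le _ _
        _ = ‖a1‖ * ‖a1 * b0 - a0 * b1‖ + ‖a0‖ * ‖a2 * b0 - a0 * b2‖ := by simp [norm_mul]
        _ ≤ ‖a1‖ * (‖a1‖ * ‖b0‖ + ‖a0‖ * ‖b1‖) + ‖a0‖ * (‖a2‖ * ‖b0‖ + ‖a0‖ * ‖b2‖) := by
            gcongr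
            · exact (norm_sub_le _ _).trans (by rw [norm_mul, norm_mul])
            · exact (norm_sub_le _ _).trans (by rw [norm_mul, norm_mul])
    refine h1.trans ?_
    have : ‖a1‖ * (‖a1‖ * ‖b0‖ + ‖a0‖ * ‖b1‖) + ‖a0‖ * (‖a2‖ * ‖b0‖ + ‖a0‖ * ‖b2‖)
        ≤ HP * (HP * HQ + HP * HQ) + HP * (HP * HQ + HP * HQ) := by
      gcongr <;> first | positivity | assumption
    nlinarith
  have hd30b : ‖d30‖ ≤ 2 * (HP ^ 2 * HQ) := by
    rw [hd30]
    calc ‖a0 * (a1 * b0 - a0 * b1)‖ = ‖a0‖ * ‖a1 * b0 - a0 * b1‖ := norm_mul _ _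
      _ ≤ HP * (‖a1‖ * ‖b0‖ + ‖a0‖ * ‖b1‖) := by
          gcongr ?_ * ?_
          · exact (norm_sub_le _ _).trans (by rw [norm_mul, norm_mul])
      _ ≤ HP * (HP * HQ + HP * HQ) := by gcongr <;> positivity
      _ = 2 * (HP ^ 2 * HQ) := by ring
  -- the final right-hand side
  have hRHS : HP ^ 2 * HQ ^ 2 * (6 * ‖A‖ / HP + 6 * ‖B‖ / HQ)
      = 6 * ‖A‖ * (HP * HQ ^ 2) + 6 * ‖B‖ * (HP ^ 2 * HQ) := by
    field_simp
  rw [habs, hRHS]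
  rcases le_or_gt ‖ξ‖ 1 with hx | hx
  · -- case |ξ| ≤ 1
    have hR1 : ((res22 P Q : ℤ) : ℂ) = ξ * A * c03 + A * c13 + ξ * B * c23 + B * c33 := by
      rw [hdet, hc03, hc13, hc23, hc33, hA, hB]; ring
    calc ‖((res22 P Q : ℤ) : ℂ)‖
        = ‖ξ * A * c03 + A * c13 + ξ * B * c23 + B * c33‖ := by rw [hR1]
      _ ≤ ‖ξ * A * c03 + A * c13 + ξ * B * c23‖ + ‖B * c33‖ := norm_add_le _ _
      _ ≤ ‖ξ * A * c03 + A * c13‖ + ‖ξ * B * c23‖ + ‖B * c33‖ := by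
          gcongr; exact norm_add_le _ _
      _ ≤ ‖ξ * A * c03‖ + ‖A * c13‖ + ‖ξ * B * c23‖ + ‖B * c33‖ := by
          gcongr; exact norm_add_le _ _
      _ = ‖ξ‖ * ‖A‖ * ‖c03‖ + ‖A‖ * ‖c13‖ + ‖ξ‖ * ‖B‖ * ‖c23‖ + ‖B‖ * ‖c33‖ := by
          simp [norm_mul]
      _ ≤ 1 * ‖A‖ * (2 * (HP * HQ ^ 2)) + ‖A‖ * (4 * (HP * HQ ^ 2))
          + 1 * ‖B‖ * (2 * (HP ^ 2 * HQ)) + ‖B‖ * (4 * (HP ^ 2 * HQ)) := by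
          gcongr <;> first | positivity | assumption
      _ = 6 * ‖A‖ * (HP * HQ ^ 2) + 6 * ‖B‖ * (HP ^ 2 * HQ) := by ring
  · -- case |ξ| > 1
    have hs1 : (1 : ℝ) ≤ ‖ξ‖ := le_of_lt hx
    have hR2 : ((res22 P Q : ℤ) : ℂ) * ξ ^ 3 = ξ * A * d00 + A * d10 + ξ * B * d20 + B * d30 := by
      rw [hdet, hd00, hd10, hd20, hd30, hA, hB]; ring
    have hs3 : (0 : ℝ) < ‖ξ‖ ^ 3 := by positivity
    rw [← mul_le_mul_iff_of_pos_right hs3]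
    calc ‖((res22 P Q : ℤ) : ℂ)‖ * ‖ξ‖ ^ 3
        = ‖((res22 P Q : ℤ) : ℂ) * ξ ^ 3‖ := by rw [norm_mul, norm_pow]
      _ = ‖ξ * A * d00 + A * d10 + ξ * B * d20 + B * d30‖ := by rw [hR2]
      _ ≤ ‖ξ * A * d00 + A * d10 + ξ * B * d20‖ + ‖B * d30‖ := norm_add_le _ _
      _ ≤ ‖ξ * A * d00 + A * d10‖ + ‖ξ * B * d20‖ + ‖B * d30‖ := by
          gcongr; exact norm_add_le _ _
      _ ≤ ‖ξ * A * d00‖ + ‖A * d10‖ + ‖ξ * B * d20‖ + ‖B * d30‖ := by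
          gcongr; exact norm_add_le _ _
      _ = ‖ξ‖ * ‖A‖ * ‖d00‖ + ‖A‖ * ‖d10‖ + ‖ξ‖ * ‖B‖ * ‖d20‖ + ‖B‖ * ‖d30‖ := by
          simp [norm_mul]
      _ ≤ ‖ξ‖ * ‖A‖ * (4 * (HP * HQ ^ 2)) + ‖A‖ * (2 * (HP * HQ ^ 2))
          + ‖ξ‖ * ‖B‖ * (4 * (HP ^ 2 * HQ)) + ‖B‖ * (2 * (HP ^ 2 * HQ)) := by
          gcongr <;> first | positivity | assumption
      _ ≤ ‖ξ‖ ^ 3 * ‖A‖ * (4 * (HP * HQ ^ 2)) + ‖ξ‖ ^ 3 * ‖A‖ * (2 * (HP * HQ ^ 2))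
          + ‖ξ‖ ^ 3 * ‖B‖ * (4 * (HP ^ 2 * HQ)) + ‖ξ‖ ^ 3 * ‖B‖ * (2 * (HP ^ 2 * HQ)) := by
          have h13 : ‖ξ‖ ≤ ‖ξ‖ ^ 3 := by
            calc ‖ξ‖ = ‖ξ‖ ^ 1 := (pow_one _).symm
              _ ≤ ‖ξ‖ ^ 3 := pow_le_pow_right₀ hs1 (by norm_num)
          have h03 : (1 : ℝ) ≤ ‖ξ‖ ^ 3 := by
            calc (1:ℝ) = 1 ^ 3 := by norm_num
              _ ≤ ‖ξ‖ ^ 3 := by gcongr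
          have e1 : ‖ξ‖ * ‖A‖ * (4 * (HP * HQ ^ 2)) ≤ ‖ξ‖ ^ 3 * ‖A‖ * (4 * (HP * HQ ^ 2)) :=
            mul_le_mul_of_nonneg_right
              (mul_le_mul_of_nonneg_right h13 (norm_nonneg _)) (by positivity)
          have e2 : ‖A‖ * (2 * (HP * HQ ^ 2)) ≤ ‖ξ‖ ^ 3 * ‖A‖ * (2 * (HP * HQ ^ 2)) := by
            rw [mul_assoc]; exact le_mul_of_one_le_left (by positivity) h03
          have e3 : ‖ξ‖ * ‖B‖ * (4 * (HP ^ 2 * HQ)) ≤ ‖ξ‖ ^ 3 * ‖B‖ * (4 * (HP ^ 2 * HQ)) :=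
            mul_le_mul_of_nonneg_right
              (mul_le_mul_of_nonneg_right h13 (norm_nonneg _)) (by positivity)
          have e4 : ‖B‖ * (2 * (HP ^ 2 * HQ)) ≤ ‖ξ‖ ^ 3 * ‖B‖ * (2 * (HP ^ 2 * HQ)) := by
            rw [mul_assoc]; exact le_mul_of_one_le_left (by positivity) h03
          linarith
      _ = (6 * ‖A‖ * (HP * HQ ^ 2) + 6 * ‖B‖ * (HP ^ 2 * HQ)) * ‖ξ‖ ^ 3 := by ring
end

section
/- Let P, Q ∈ Z[T] be nonzero polynomials of degree at most 2 whose greatest common divisor L ∈ Z[T] has degree 1. Then for any complex number ξ, H(L)|L(ξ)| ≤ γ ( H(P)|Q(ξ)| + H(Q)|P(ξ)| ), where γ = (1+√5)/2. -/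
open Polynomial

lemma gr_sq : gr ^ 2 = gr + 1 := by
  have h5 : Real.sqrt 5 ^ 2 = 5 := Real.sq_sqrt (by norm_num)
  unfold gr; nlinarith [h5]

lemma one_le_gr : 1 ≤ gr := by
  have : (1:ℝ) ≤ Real.sqrt 5 := by
    rw [show (1:ℝ) = Real.sqrt 1 by simp]
    exact Real.sqrt_le_sqrt (by norm_num)
  unfold gr; linarith

lemma gel_aux {A B C D E : ℝ} (hA : 0 ≤ A) (hB : 0 ≤ B) (hC : 0 ≤ C) (hD : 0 ≤ D)
    (hE0 : 0 ≤ E) (hE1 : A*D - B*C ≤ E) (hE2 : B*C - A*D ≤ E) :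
    max B A * max D C ≤ gr * max (B*D) (max E (A*C)) := by
  have h1 : 1 ≤ gr := one_le_gr
  have h2 : gr ^ 2 = gr + 1 := gr_sq
  have hg0 : (0:ℝ) < gr := lt_of_lt_of_le one_pos h1
  set M := max (B*D) (max E (A*C)) with hMdef
  have m1 : B*D ≤ M := le_max_left _ _
  have m2 : E ≤ M := le_trans (le_max_left _ _) (le_max_right _ _)
  have m3 : A*C ≤ M := le_trans (le_max_right _ _) (le_max_right _ _)
  have hM : 0 ≤ M := le_trans (mul_nonneg hB hD) m1
  have hMg : M ≤ gr * M := by nlinarith [mul_nonneg (sub_nonneg.mpr h1) hM]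
  have mm1 : gr * (B*D) ≤ gr * M := mul_le_mul_of_nonneg_left m1 hg0.le
  have mm2 : gr * E ≤ gr * M := mul_le_mul_of_nonneg_left m2 hg0.le
  have mm3 : gr * (A*C) ≤ gr * M := mul_le_mul_of_nonneg_left m3 hg0.le
  rcases le_total A B with h | h <;> rcases le_total C D with h' | h'
  · rw [max_eq_left h, max_eq_left h']
    linarith
  · rw [max_eq_left h, max_eq_right h']
    by_cases hca : B ≤ gr * A
    · have : B * C ≤ gr * A * C := mul_le_mul_of_nonneg_right hca hC
      nlinarith
    · by_cases hdc : C ≤ gr * D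
      · have : B * C ≤ B * (gr * D) := mul_le_mul_of_nonneg_left hdc hB
        nlinarith
      · push_neg at hca hdc
        have hAD : gr * A * (gr * D) ≤ B * C :=
          mul_le_mul hca.le hdc.le (by positivity) (by linarith)
        have hAD' : (gr+1) * (A*D) ≤ B*C := by
          calc (gr+1) * (A*D) = gr * A * (gr * D) := by rw [← h2]; ring
            _ ≤ B*C := hAD
        have hkey : B * C ≤ gr * E := by
          have t1 := mul_le_mul_of_nonneg_left hAD' (by linarith : (0:ℝ) ≤ gr - 1)
          have t2 := mul_le_mul_of_nonneg_left hE2 hg0.le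
          nlinarith [t1, t2]
        linarith
  · rw [max_eq_right h, max_eq_left h']
    by_cases hca : A ≤ gr * B
    · have : A * D ≤ gr * B * D := mul_le_mul_of_nonneg_right hca hD
      nlinarith
    · by_cases hdc : D ≤ gr * C
      · have : A * D ≤ A * (gr * C) := mul_le_mul_of_nonneg_left hdc hA
        nlinarith
      · push_neg at hca hdc
        have hAD : gr * B * (gr * C) ≤ A * D :=
          mul_le_mul hca.le hdc.le (by positivity) (by linarith)
        have hAD' : (gr+1) * (B*C) ≤ A*D := by
          calc (gr+1) * (B*C) = gr * B * (gr * C) := by rw [← h2]; ring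
            _ ≤ A*D := hAD
        have hkey : A * D ≤ gr * E := by
          have t1 := mul_le_mul_of_nonneg_left hAD' (by linarith : (0:ℝ) ≤ gr - 1)
          have t2 := mul_le_mul_of_nonneg_left hE1 hg0.le
          nlinarith [t1, t2]
        linarith
  · rw [max_eq_right h, max_eq_right h']
    linarith


lemma cabs_int (n : ℤ) : ‖(n:ℂ)‖ = |(n:ℝ)| := by
  exact_mod_cast Complex.norm_intCast n

lemma abs_aux (x y : ℝ) : |x| - |y| ≤ |x + y| := by
  have h := abs_sub_abs_le_abs_sub x (-y)
  simpa [sub_neg_eq_add] using h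

theorem common_factor_bound (P Q L : Polynomial ℤ)
    (hP0 : P ≠ 0) (hQ0 : Q ≠ 0) (hP : P.degree ≤ 2) (hQ : Q.degree ≤ 2)
    (hLP : L ∣ P) (hLQ : L ∣ Q)
    (hgcd : ∀ D : Polynomial ℤ, D ∣ P → D ∣ Q → D ∣ L)
    (hLdeg : L.degree = 1) (ξ : ℂ) :
    HZ2 L * ‖aeval ξ L‖ ≤
      gr * (HZ2 P * ‖aeval ξ Q‖ + HZ2 Q * ‖aeval ξ P‖) := by
  obtain ⟨P₁, hPfac⟩ := hLP
  obtain ⟨Q₁, hQfac⟩ := hLQ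
  have hL0 : L ≠ 0 := fun h => by simp [h] at hLdeg
  have hP₁0 : P₁ ≠ 0 := fun h => hP0 (by rw [hPfac, h, mul_zero])
  have hQ₁0 : Q₁ ≠ 0 := fun h => hQ0 (by rw [hQfac, h, mul_zero])
  have hLnat : L.natDegree = 1 := natDegree_eq_of_degree_eq_some hLdeg
  have hP₁nat : P₁.natDegree ≤ 1 := by
    have h2 : P.natDegree ≤ 2 := natDegree_le_iff_degree_le.mpr hP
    rw [hPfac, natDegree_mul hL0 hP₁0, hLnat] at h2
    omega
  have hQ₁nat : Q₁.natDegree ≤ 1 := by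
    have h2 : Q.natDegree ≤ 2 := natDegree_le_iff_degree_le.mpr hQ
    rw [hQfac, natDegree_mul hL0 hQ₁0, hLnat] at h2
    omega
  have hP₁deg : P₁.degree ≤ 1 := natDegree_le_iff_degree_le.mp hP₁nat
  have hQ₁deg : Q₁.degree ≤ 1 := natDegree_le_iff_degree_le.mp hQ₁nat
  set a := L.coeff 1 with ha_def
  set b := L.coeff 0 with hb_def
  set c := P₁.coeff 1 with hc_def
  set d := P₁.coeff 0 with hd_def
  set e := Q₁.coeff 1 with he_def
  set f := Q₁.coeff 0 with hf_def
  have hLr : L = C a * X + C b := eq_X_add_C_of_degree_le_one hLdeg.le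
  have hP₁r : P₁ = C c * X + C d := eq_X_add_C_of_degree_le_one hP₁deg
  have hQ₁r : Q₁ = C e * X + C f := eq_X_add_C_of_degree_le_one hQ₁deg
  -- coefficient identities for P and Q
  have hPexp : P = C (a*c) * X^2 + C (a*d + b*c) * X + C (b*d) := by
    rw [hPfac, hLr, hP₁r]; simp only [C_add, C_mul]; ring
  have hQexp : Q = C (a*e) * X^2 + C (a*f + b*e) * X + C (b*f) := by
    rw [hQfac, hLr, hQ₁r]; simp only [C_add, C_mul]; ring
  have hPc0 : P.coeff 0 = b*d := by rw [hPexp]; simp only [coeff_add, coeff_C_mul, coeff_X_pow, coeff_C, coeff_X]; norm_num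
  have hPc1 : P.coeff 1 = a*d + b*c := by rw [hPexp]; simp only [coeff_add, coeff_C_mul, coeff_X_pow, coeff_C, coeff_X]; norm_num
  have hPc2 : P.coeff 2 = a*c := by rw [hPexp]; simp only [coeff_add, coeff_C_mul, coeff_X_pow, coeff_C, coeff_X]; norm_num
  have hQc0 : Q.coeff 0 = b*f := by rw [hQexp]; simp only [coeff_add, coeff_C_mul, coeff_X_pow, coeff_C, coeff_X]; norm_num
  have hQc1 : Q.coeff 1 = a*f + b*e := by rw [hQexp]; simp only [coeff_add, coeff_C_mul, coeff_X_pow, coeff_C, coeff_X]; norm_num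
  have hQc2 : Q.coeff 2 = a*e := by rw [hQexp]; simp only [coeff_add, coeff_C_mul, coeff_X_pow, coeff_C, coeff_X]; norm_num
  -- HZ2 expressions
  have hL2 : L.coeff 2 = 0 := coeff_eq_zero_of_degree_lt (by rw [hLdeg]; decide)
  have hP₁2 : P₁.coeff 2 = 0 := coeff_eq_zero_of_degree_lt (lt_of_le_of_lt hP₁deg (by decide))
  have hQ₁2 : Q₁.coeff 2 = 0 := coeff_eq_zero_of_degree_lt (lt_of_le_of_lt hQ₁deg (by decide))
  have hHL : HZ2 L = max |(b:ℝ)| |(a:ℝ)| := by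
    unfold HZ2; rw [← ha_def, ← hb_def, hL2]
    simp only [Int.cast_zero, abs_zero]
    rw [max_eq_left (abs_nonneg ((a:ℝ)))]
  have hHP₁ : HZ2 P₁ = max |(d:ℝ)| |(c:ℝ)| := by
    unfold HZ2; rw [← hc_def, ← hd_def, hP₁2]
    simp only [Int.cast_zero, abs_zero]
    rw [max_eq_left (abs_nonneg ((c:ℝ)))]
  have hHQ₁ : HZ2 Q₁ = max |(f:ℝ)| |(e:ℝ)| := by
    unfold HZ2; rw [← he_def, ← hf_def, hQ₁2]
    simp only [Int.cast_zero, abs_zero]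
    rw [max_eq_left (abs_nonneg ((e:ℝ)))]
  have hHP : HZ2 P = max (|(b:ℝ)| * |(d:ℝ)|)
      (max |(a:ℝ)*(d:ℝ) + (b:ℝ)*(c:ℝ)| (|(a:ℝ)| * |(c:ℝ)|)) := by
    unfold HZ2; rw [hPc0, hPc1, hPc2]; push_cast; rw [abs_mul, abs_mul]
  have hHQ : HZ2 Q = max (|(b:ℝ)| * |(f:ℝ)|)
      (max |(a:ℝ)*(f:ℝ) + (b:ℝ)*(e:ℝ)| (|(a:ℝ)| * |(e:ℝ)|)) := by
    unfold HZ2; rw [hQc0, hQc1, hQc2]; push_cast; rw [abs_mul, abs_mul]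
  -- Gelfond inequalities
  have key1 : HZ2 L * HZ2 P₁ ≤ gr * HZ2 P := by
    rw [hHL, hHP₁, hHP]
    exact gel_aux (abs_nonneg _) (abs_nonneg _) (abs_nonneg _) (abs_nonneg _) (abs_nonneg _)
      (by rw [← abs_mul, ← abs_mul]; exact abs_aux _ _)
      (by rw [← abs_mul, ← abs_mul]
          have h := abs_aux ((b:ℝ)*(c:ℝ)) ((a:ℝ)*(d:ℝ))
          rwa [add_comm] at h)
  have key2 : HZ2 L * HZ2 Q₁ ≤ gr * HZ2 Q := by
    rw [hHL, hHQ₁, hHQ]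
    exact gel_aux (abs_nonneg _) (abs_nonneg _) (abs_nonneg _) (abs_nonneg _) (abs_nonneg _)
      (by rw [← abs_mul, ← abs_mul]; exact abs_aux _ _)
      (by rw [← abs_mul, ← abs_mul]
          have h := abs_aux ((b:ℝ)*(e:ℝ)) ((a:ℝ)*(f:ℝ))
          rwa [add_comm] at h)
  -- evaluations
  have hvP : (aeval ξ P₁ : ℂ) = (c:ℂ)*ξ + (d:ℂ) := by rw [hP₁r]; push_cast; simp
  have hvQ : (aeval ξ Q₁ : ℂ) = (e:ℂ)*ξ + (f:ℂ) := by rw [hQ₁r]; push_cast; simp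
  set u := ‖aeval ξ P₁‖ with hu_def
  set v := ‖aeval ξ Q₁‖ with hv_def
  -- key lower bound
  have hHP₁0 : 0 ≤ HZ2 P₁ := le_trans (abs_nonneg _) (le_max_left _ _)
  have hHQ₁0 : 0 ≤ HZ2 Q₁ := le_trans (abs_nonneg _) (le_max_left _ _)
  have hu0' : 0 ≤ u := norm_nonneg _
  have hv0' : 0 ≤ v := norm_nonneg _
  have key3 : (1:ℝ) ≤ HZ2 P₁ * v + HZ2 Q₁ * u := by
    by_cases hr : c * f - d * e = 0
    · have hc0' : c = 0 := by
        by_contra hcne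
        have hene : e ≠ 0 := by
          intro he0
          have hf0 : f = 0 := by
            have hcf : c * f = 0 := by rw [he0] at hr; simpa using hr
            rcases mul_eq_zero.mp hcf with h | h
            · exact absurd h hcne
            · exact h
          exact hQ₁0 (by rw [hQ₁r, he0, hf0]; simp)
        have hed : e * d = c * f := by linear_combination -hr
        have hprop : C e * P₁ = C c * Q₁ := by
          rw [hP₁r, hQ₁r, mul_add, mul_add, ← mul_assoc, ← mul_assoc,
            ← C_mul, ← C_mul, ← C_mul, ← C_mul, hed, mul_comm e c]
        have hdvd1 : P₁.primPart ∣ C c * Q₁ := by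
          rw [← hprop]; exact P₁.primPart_dvd.trans (Dvd.intro_left (C e) rfl)
        have hCQ0 : C c * Q₁ ≠ 0 := mul_ne_zero (by simpa using hcne) hQ₁0
        have hdvd2 : P₁.primPart ∣ (C c * Q₁).primPart :=
          ((P₁.isPrimitive_primPart).dvd_primPart_iff_dvd hCQ0).mpr hdvd1
        rw [primPart_mul hCQ0] at hdvd2
        have hdvd3 : P₁.primPart ∣ Q₁.primPart :=
          ((isUnit_primPart_C c).dvd_mul_left).mp hdvd2
        have hdvdQ₁ : P₁.primPart ∣ Q₁ := hdvd3.trans Q₁.primPart_dvd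
        have hDP : L * P₁.primPart ∣ P := by
          rw [hPfac]; exact mul_dvd_mul_left L P₁.primPart_dvd
        have hDQ : L * P₁.primPart ∣ Q := by
          rw [hQfac]; exact mul_dvd_mul_left L hdvdQ₁
        have hDL := hgcd _ hDP hDQ
        have hdegle : (L * P₁.primPart).degree ≤ L.degree := degree_le_of_dvd hDL hL0
        have hP₁d1 : P₁.degree = 1 := le_antisymm hP₁deg (le_degree_of_ne_zero (hc_def ▸ hcne))
        have hP₁n1 : P₁.natDegree = 1 := natDegree_eq_of_degree_eq_some hP₁d1
        have hppdeg : (P₁.primPart).degree = 1 := by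
          rw [degree_eq_natDegree P₁.primPart_ne_zero, natDegree_primPart, hP₁n1]; rfl
        rw [degree_mul, hLdeg, hppdeg] at hdegle
        exact absurd hdegle (by decide)
      have hd0' : d ≠ 0 := fun hd0 => hP₁0 (by rw [hP₁r, hc0', hd0]; simp)
      have he0' : e = 0 := by
        have hde : d * e = 0 := by rw [hc0'] at hr; simpa using hr
        rcases mul_eq_zero.mp hde with h | h
        · exact absurd h hd0'
        · exact h
      have hf0' : f ≠ 0 := fun hf0 => hQ₁0 (by rw [hQ₁r, he0', hf0]; simp)
      have hu1 : (1:ℝ) ≤ u := by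
        rw [hu_def, hvP, hc0']
        simp only [Int.cast_zero, zero_mul, zero_add]
        rw [cabs_int]
        exact_mod_cast Int.one_le_abs hd0'
      have hQf1 : (1:ℝ) ≤ HZ2 Q₁ := by
        rw [hHQ₁]
        refine le_trans ?_ (le_max_left _ _)
        exact_mod_cast Int.one_le_abs hf0'
      nlinarith [mul_le_mul hQf1 hu1 zero_le_one (le_trans zero_le_one hQf1),
        mul_nonneg hHP₁0 hv0']
    · have h1 : (1:ℝ) ≤ |((c*f - d*e : ℤ) : ℝ)| := by
        exact_mod_cast Int.one_le_abs hr
      have h2 : ((c*f - d*e : ℤ) : ℂ) = (c:ℂ) * (aeval ξ Q₁) - (e:ℂ) * (aeval ξ P₁) := by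
        rw [hvP, hvQ]; push_cast; ring
      have h3 : |((c*f - d*e : ℤ):ℝ)| ≤ |(c:ℝ)| * v + |(e:ℝ)| * u := by
        calc |((c*f - d*e : ℤ):ℝ)| = ‖((c*f - d*e : ℤ):ℂ)‖ := (cabs_int _).symm
          _ = ‖(c:ℂ) * (aeval ξ Q₁) - (e:ℂ) * (aeval ξ P₁)‖ := by rw [h2]
          _ ≤ ‖(c:ℂ) * (aeval ξ Q₁)‖ + ‖(e:ℂ) * (aeval ξ P₁)‖ := by
              have hadd := norm_add_le ((c:ℂ) * (aeval ξ Q₁)) (-((e:ℂ) * (aeval ξ P₁)))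
              simpa [sub_eq_add_neg] using hadd
          _ = |(c:ℝ)| * v + |(e:ℝ)| * u := by
              rw [norm_mul, norm_mul, cabs_int, cabs_int, hu_def, hv_def]
      have hb1 : |(c:ℝ)| ≤ HZ2 P₁ := by rw [hHP₁]; exact le_max_right _ _
      have hb2 : |(e:ℝ)| ≤ HZ2 Q₁ := by rw [hHQ₁]; exact le_max_right _ _
      nlinarith [mul_le_mul_of_nonneg_right hb1 hv0', mul_le_mul_of_nonneg_right hb2 hu0']
  -- final assembly
  have hu0 : 0 ≤ u := norm_nonneg _
  have hv0 : 0 ≤ v := norm_nonneg _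
  have hl0 : 0 ≤ ‖aeval ξ L‖ := norm_nonneg _
  have hHL0 : 0 ≤ HZ2 L := le_trans (abs_nonneg _) (le_max_left _ _)
  have hPv : ‖aeval ξ P‖ = ‖aeval ξ L‖ * u := by
    rw [hPfac, map_mul, norm_mul]
  have hQv : ‖aeval ξ Q‖ = ‖aeval ξ L‖ * v := by
    rw [hQfac, map_mul, norm_mul]
  rw [hPv, hQv]
  have s1 : HZ2 L * HZ2 P₁ * v ≤ gr * HZ2 P * v := mul_le_mul_of_nonneg_right key1 hv0
  have s2 : HZ2 L * HZ2 Q₁ * u ≤ gr * HZ2 Q * u := mul_le_mul_of_nonneg_right key2 hu0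
  have s3 : HZ2 L * 1 ≤ HZ2 L * (HZ2 P₁ * v + HZ2 Q₁ * u) :=
    mul_le_mul_of_nonneg_left key3 hHL0
  have s4 : HZ2 L ≤ gr * (HZ2 P * v + HZ2 Q * u) := by nlinarith [s1, s2, s3]
  calc HZ2 L * ‖aeval ξ L‖
      ≤ (gr * (HZ2 P * v + HZ2 Q * u)) * ‖aeval ξ L‖ :=
        mul_le_mul_of_nonneg_right s4 hl0
    _ = gr * (HZ2 P * (‖aeval ξ L‖ * v) + HZ2 Q * (‖aeval ξ L‖ * u)) := by
        ring
end

section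
/- Let ξ ∈ C and let P, Q, R ∈ C[T] be polynomials of degree at most 2. Let D be the determinant of the 3×3 matrix whose rows are the coefficient vectors of P, Q, R (in the basis 1, T, T²). Then |D| ≤ 2 ( |P(ξ)| H(Q) H(R) + H(P) |Q(ξ)| H(R) + H(P) H(Q) |R(ξ)| ). -/
open Polynomial

lemma coeff_le_H2 (P : Polynomial ℂ) (i : ℕ) (h : i ≤ 2) :
    ‖P.coeff i‖ ≤ H2 P := by
  interval_cases i
  · exact le_max_left _ _
  · exact le_trans (le_max_left _ _) (le_max_right _ _)
  · exact le_trans (le_max_right _ _) (le_max_right _ _)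

lemma H2_nonneg (P : Polynomial ℂ) : 0 ≤ H2 P :=
  le_trans (norm_nonneg _) (coeff_le_H2 P 0 (by norm_num))

lemma abs_sub_le'' (a b : ℂ) : ‖a - b‖ ≤ ‖a‖ + ‖b‖ := by
  simpa [sub_eq_add_neg] using norm_add_le a (-b)

lemma minor_bound (Q R : Polynomial ℂ) (i j : ℕ) (hi : i ≤ 2) (hj : j ≤ 2) :
    ‖Q.coeff i * R.coeff j - Q.coeff j * R.coeff i‖ ≤ 2 * (H2 Q * H2 R) := by
  calc ‖Q.coeff i * R.coeff j - Q.coeff j * R.coeff i‖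
      ≤ ‖Q.coeff i * R.coeff j‖ + ‖Q.coeff j * R.coeff i‖ :=
        abs_sub_le'' _ _
    _ = ‖Q.coeff i‖ * ‖R.coeff j‖
        + ‖Q.coeff j‖ * ‖R.coeff i‖ := by simp [map_mul]
    _ ≤ H2 Q * H2 R + H2 Q * H2 R := by
        gcongr <;> first | exact coeff_le_H2 _ _ (by assumption) | exact H2_nonneg _
    _ = 2 * (H2 Q * H2 R) := by ring

lemma eval_eq3 (P : Polynomial ℂ) (hP : P.degree ≤ 2) (ξ : ℂ) :
    P.eval ξ = P.coeff 0 + P.coeff 1 * ξ + P.coeff 2 * ξ ^ 2 := by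
  have h : P.natDegree < 3 := Nat.lt_succ_of_le (natDegree_le_iff_degree_le.2 hP)
  rw [Polynomial.eval_eq_sum_range' h]
  simp [Finset.sum_range_succ]

theorem det_three_polys_bound (ξ : ℂ) (P Q R : Polynomial ℂ)
    (hP : P.degree ≤ 2) (hQ : Q.degree ≤ 2) (hR : R.degree ≤ 2) :
    ‖Matrix.det !![P.coeff 0, P.coeff 1, P.coeff 2;
                               Q.coeff 0, Q.coeff 1, Q.coeff 2;
                               R.coeff 0, R.coeff 1, R.coeff 2]‖ ≤
      2 * (‖P.eval ξ‖ * H2 Q * H2 R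
         + H2 P * ‖Q.eval ξ‖ * H2 R
         + H2 P * H2 Q * ‖R.eval ξ‖) := by
  have key : Matrix.det !![P.coeff 0, P.coeff 1, P.coeff 2;
                           Q.coeff 0, Q.coeff 1, Q.coeff 2;
                           R.coeff 0, R.coeff 1, R.coeff 2] =
      P.eval ξ * (Q.coeff 1 * R.coeff 2 - Q.coeff 2 * R.coeff 1)
      - Q.eval ξ * (P.coeff 1 * R.coeff 2 - P.coeff 2 * R.coeff 1)
      + R.eval ξ * (P.coeff 1 * Q.coeff 2 - P.coeff 2 * Q.coeff 1) := by
    rw [Matrix.det_fin_three, eval_eq3 P hP, eval_eq3 Q hQ, eval_eq3 R hR]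
    simp [Matrix.cons_val_zero, Matrix.cons_val_one]
    ring
  rw [key]
  have tri : ∀ a b c : ℂ, ‖a - b + c‖ ≤
      ‖a‖ + ‖b‖ + ‖c‖ := fun a b c =>
    le_trans (norm_add_le _ _) (by gcongr; exact abs_sub_le'' _ _)
  calc ‖P.eval ξ * (Q.coeff 1 * R.coeff 2 - Q.coeff 2 * R.coeff 1)
      - Q.eval ξ * (P.coeff 1 * R.coeff 2 - P.coeff 2 * R.coeff 1)
      + R.eval ξ * (P.coeff 1 * Q.coeff 2 - P.coeff 2 * Q.coeff 1)‖
      ≤ ‖P.eval ξ * (Q.coeff 1 * R.coeff 2 - Q.coeff 2 * R.coeff 1)‖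
      + ‖Q.eval ξ * (P.coeff 1 * R.coeff 2 - P.coeff 2 * R.coeff 1)‖
      + ‖R.eval ξ * (P.coeff 1 * Q.coeff 2 - P.coeff 2 * Q.coeff 1)‖ :=
        tri _ _ _
    _ ≤ ‖P.eval ξ‖ * (2 * (H2 Q * H2 R))
      + ‖Q.eval ξ‖ * (2 * (H2 P * H2 R))
      + ‖R.eval ξ‖ * (2 * (H2 P * H2 Q)) := by
        simp only [norm_mul]
        gcongr <;> exact minor_bound _ _ _ _ (by norm_num) (by norm_num)
    _ = 2 * (‖P.eval ξ‖ * H2 Q * H2 R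
         + H2 P * ‖Q.eval ξ‖ * H2 R
         + H2 P * H2 Q * ‖R.eval ξ‖) := by ring
end

section
/- Let ξ ∈ C with [Q(ξ):Q] > 2, and let (X_i) and (P_i) be sequences as in the minimal-polynomial construction (H(P_i) = X_i strictly increasing, |P_{i+1}(ξ)| < |P_i(ξ)|, |P_i(ξ)| minimal among nonzero integer polynomials of degree ≤ 2 and height < X_{i+1}, P_i and P_{i+1} linearly independent over Q). If lim_{i→∞} X_{i+1} |P_i(ξ)| = 0, then there exist infinitely many indices i ≥ 2 such that P_{i-1}, P_i, P_{i+1} are linearly independent over Q. -/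
open Polynomial Filter

def htZ (P : Polynomial ℤ) : ℤ :=
  max |P.coeff 0| (max |P.coeff 1| |P.coeff 2|)

noncomputable def quadP (x y z : ℤ) : Polynomial ℤ := C x + C y * X + C z * X ^ 2

lemma quadP_degree (x y z : ℤ) : (quadP x y z).degree ≤ 2 := by
  unfold quadP; compute_degree

lemma quadP_coeff0 (x y z : ℤ) : (quadP x y z).coeff 0 = x := by
  simp [quadP, coeff_add, coeff_C, coeff_C_mul, coeff_X_pow, -eq_intCast]

lemma quadP_coeff1 (x y z : ℤ) : (quadP x y z).coeff 1 = y := by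
  simp [quadP, coeff_add, coeff_C, coeff_C_mul, coeff_X_pow, -eq_intCast]

lemma quadP_aeval (x y z : ℤ) (ξ : ℂ) :
    aeval ξ (quadP x y z) = (x : ℂ) + (y : ℂ) * ξ + (z : ℂ) * ξ ^ 2 := by
  simp [quadP, map_add, map_mul, aeval_X, aeval_C]

lemma prop3 {p0 p1 p2 q0 q1 q2 : ℚ} (h12 : p1 * q2 = p2 * q1) (h20 : p2 * q0 = p0 * q2)
    (h01 : p0 * q1 = p1 * q0) (hq : ¬(q0 = 0 ∧ q1 = 0 ∧ q2 = 0)) :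
    ∃ a : ℚ, p0 = a * q0 ∧ p1 = a * q1 ∧ p2 = a * q2 := by
  by_cases h0 : q0 = 0
  · by_cases h1 : q1 = 0
    · have h2 : q2 ≠ 0 := by tauto
      refine ⟨p2 / q2, ?_, ?_, by field_simp⟩
      · field_simp; linear_combination -h20
      · field_simp; linear_combination h12
    · refine ⟨p1 / q1, ?_, by field_simp, ?_⟩
      · field_simp; linear_combination h01
      · field_simp; linear_combination -h12
  · refine ⟨p0 / q0, by field_simp, ?_, ?_⟩
    · field_simp; linear_combination -h01
    · field_simp; linear_combination h20

lemma tbound {t : ℚ} {aN ai : ℤ} (ht : (ai : ℚ) = t * aN) (haN : aN ≠ 0) (ht0 : t ≠ 0) :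
    (1 : ℝ) ≤ |(t : ℝ)| * |(aN : ℝ)| := by
  have hai : ai ≠ 0 := by
    intro h; rw [h] at ht
    exact (mul_ne_zero ht0 (Int.cast_ne_zero.mpr haN)) (by exact_mod_cast ht.symm)
  have h1 : (1 : ℝ) ≤ |(ai : ℝ)| := by exact_mod_cast Int.one_le_abs hai
  have h2 : |(ai : ℝ)| = |(t : ℝ)| * |(aN : ℝ)| := by
    have : (ai : ℝ) = (t : ℝ) * (aN : ℝ) := by exact_mod_cast ht
    rw [this, abs_mul]
  linarith

theorem infinitely_many_independent_triples (ξ : ℂ)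
    (hξ : ∀ P : Polynomial ℤ, P ≠ 0 → P.degree ≤ 2 → aeval ξ P ≠ 0)
    (Xs : ℕ → ℕ) (Ps : ℕ → Polynomial ℤ)
    (hmono : StrictMono Xs) (hpos : ∀ i, 0 < Xs i)
    (hne : ∀ i, Ps i ≠ 0) (hdeg : ∀ i, (Ps i).degree ≤ 2)
    (hht : ∀ i, htZ (Ps i) = Xs i)
    (hdec : ∀ i, ‖aeval ξ (Ps (i + 1))‖ < ‖aeval ξ (Ps i)‖)
    (hmin : ∀ i, ∀ P : Polynomial ℤ, P ≠ 0 → P.degree ≤ 2 → htZ P < Xs (i + 1) →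
      ‖aeval ξ (Ps i)‖ ≤ ‖aeval ξ P‖)
    (hind : ∀ i, LinearIndependent ℚ
      ![(Ps i).map (Int.castRingHom ℚ), (Ps (i + 1)).map (Int.castRingHom ℚ)])
    (hlim : Tendsto (fun i => (Xs (i + 1) : ℝ) * ‖aeval ξ (Ps i)‖)
      atTop (nhds 0)) :
    ∀ N : ℕ, ∃ i ≥ N, LinearIndependent ℚ
      ![(Ps i).map (Int.castRingHom ℚ), (Ps (i + 1)).map (Int.castRingHom ℚ),
        (Ps (i + 2)).map (Int.castRingHom ℚ)] := by
  intro N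
  by_contra hcon
  push_neg at hcon
  -- high coefficients vanish
  have hcoeff_hi : ∀ i k, 3 ≤ k → (Ps i).coeff k = 0 := by
    intro i k hk
    apply Polynomial.coeff_eq_zero_of_degree_lt
    refine lt_of_le_of_lt (hdeg i) ?_
    exact_mod_cast (by omega : (2:ℕ) < k)
  -- evaluation formula
  have hv : ∀ i, aeval ξ (Ps i) =
      ((Ps i).coeff 0 : ℂ) + ((Ps i).coeff 1 : ℂ) * ξ + ((Ps i).coeff 2 : ℂ) * ξ ^ 2 := by
    intro i
    have hd : (Ps i).natDegree < 3 := by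
      have := (Polynomial.natDegree_le_iff_degree_le (n := 2)).mpr (hdeg i); omega
    rw [Polynomial.aeval_eq_sum_range' hd]
    simp [Finset.sum_range_succ]
  -- dependence relations
  have hdep : ∀ i, N ≤ i → ∃ α β : ℚ, α ≠ 0 ∧ ∀ k : ℕ,
      ((Ps (i+2)).coeff k : ℚ) = α * (Ps i).coeff k + β * (Ps (i+1)).coeff k := by
    intro i hi
    have h3 := hcon i hi
    have h2 : LinearIndependent ℚ ![(Ps (i+1)).map (Int.castRingHom ℚ),
        (Ps (i+2)).map (Int.castRingHom ℚ)] := hind (i+1)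
    rw [show (![(Ps i).map (Int.castRingHom ℚ), (Ps (i+1)).map (Int.castRingHom ℚ),
          (Ps (i+2)).map (Int.castRingHom ℚ)]) =
        Fin.cons ((Ps i).map (Int.castRingHom ℚ)) ![(Ps (i+1)).map (Int.castRingHom ℚ),
          (Ps (i+2)).map (Int.castRingHom ℚ)] from rfl,
      linearIndependent_fin_cons] at h3
    push_neg at h3
    have hmem := h3 h2
    rw [Matrix.range_cons, Matrix.range_cons_empty, Set.singleton_union,
      Submodule.mem_span_pair] at hmem
    obtain ⟨a, b, hab⟩ := hmem
    have hb : b ≠ 0 := by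
      intro hb0
      rw [hb0, zero_smul, add_zero] at hab
      have := (linearIndependent_fin2.mp (hind i)).2 a
      simp only [Matrix.cons_val_one, Matrix.head_cons, Matrix.cons_val_zero] at this
      exact this hab
    refine ⟨b⁻¹, -(a / b), inv_ne_zero hb, ?_⟩
    intro k
    have hco := congrArg (fun p => Polynomial.coeff p k) hab
    simp only [Polynomial.coeff_add, Polynomial.coeff_smul, Polynomial.coeff_map,
      smul_eq_mul, eq_intCast, Int.cast_id] at hco
    field_simp
    linear_combination hco
  -- minors
  have hpar : ∀ i, N ≤ i → ∃ t : ℚ, t ≠ 0 ∧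
      (((Ps i).coeff 1 * (Ps (i+1)).coeff 2 - (Ps i).coeff 2 * (Ps (i+1)).coeff 1 : ℤ) : ℚ)
        = t * ((Ps N).coeff 1 * (Ps (N+1)).coeff 2 - (Ps N).coeff 2 * (Ps (N+1)).coeff 1 : ℤ) ∧
      (((Ps i).coeff 2 * (Ps (i+1)).coeff 0 - (Ps i).coeff 0 * (Ps (i+1)).coeff 2 : ℤ) : ℚ)
        = t * ((Ps N).coeff 2 * (Ps (N+1)).coeff 0 - (Ps N).coeff 0 * (Ps (N+1)).coeff 2 : ℤ) ∧
      (((Ps i).coeff 0 * (Ps (i+1)).coeff 1 - (Ps i).coeff 1 * (Ps (i+1)).coeff 0 : ℤ) : ℚ)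
        = t * ((Ps N).coeff 0 * (Ps (N+1)).coeff 1 - (Ps N).coeff 1 * (Ps (N+1)).coeff 0 : ℤ) := by
    intro i hi
    induction i, hi using Nat.le_induction with
    | base => exact ⟨1, one_ne_zero, by rw [one_mul], by rw [one_mul], by rw [one_mul]⟩
    | succ i hi ih =>
      obtain ⟨t, ht0, hA1, hB1, hD1⟩ := ih
      obtain ⟨α, β, hα, hk⟩ := hdep i hi
      have e0 := hk 0; have e1 := hk 1; have e2 := hk 2
      refine ⟨-α * t, by simp [hα, ht0], ?_, ?_, ?_⟩
      · have h : (((Ps (i+1)).coeff 1 * (Ps (i+2)).coeff 2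
            - (Ps (i+1)).coeff 2 * (Ps (i+2)).coeff 1 : ℤ) : ℚ)
            = -α * (((Ps i).coeff 1 * (Ps (i+1)).coeff 2
              - (Ps i).coeff 2 * (Ps (i+1)).coeff 1 : ℤ) : ℚ) := by
          push_cast
          linear_combination ((Ps (i+1)).coeff 1 : ℚ) * e2 - ((Ps (i+1)).coeff 2 : ℚ) * e1
        rw [show i+1+1 = i+2 from rfl, h, hA1]; ring
      · have h : (((Ps (i+1)).coeff 2 * (Ps (i+2)).coeff 0
            - (Ps (i+1)).coeff 0 * (Ps (i+2)).coeff 2 : ℤ) : ℚ)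
            = -α * (((Ps i).coeff 2 * (Ps (i+1)).coeff 0
              - (Ps i).coeff 0 * (Ps (i+1)).coeff 2 : ℤ) : ℚ) := by
          push_cast
          linear_combination ((Ps (i+1)).coeff 2 : ℚ) * e0 - ((Ps (i+1)).coeff 0 : ℚ) * e2
        rw [show i+1+1 = i+2 from rfl, h, hB1]; ring
      · have h : (((Ps (i+1)).coeff 0 * (Ps (i+2)).coeff 1
            - (Ps (i+1)).coeff 1 * (Ps (i+2)).coeff 0 : ℤ) : ℚ)
            = -α * (((Ps i).coeff 0 * (Ps (i+1)).coeff 1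
              - (Ps i).coeff 1 * (Ps (i+1)).coeff 0 : ℤ) : ℚ) := by
          push_cast
          linear_combination ((Ps (i+1)).coeff 0 : ℚ) * e1 - ((Ps (i+1)).coeff 1 : ℚ) * e0
        rw [show i+1+1 = i+2 from rfl, h, hD1]; ring
  -- not all minors at N vanish
  have hANZ : ¬((Ps N).coeff 1 * (Ps (N+1)).coeff 2 - (Ps N).coeff 2 * (Ps (N+1)).coeff 1 = 0
      ∧ (Ps N).coeff 2 * (Ps (N+1)).coeff 0 - (Ps N).coeff 0 * (Ps (N+1)).coeff 2 = 0
      ∧ (Ps N).coeff 0 * (Ps (N+1)).coeff 1 - (Ps N).coeff 1 * (Ps (N+1)).coeff 0 = 0) := by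
    rintro ⟨hA0, hB0, hD0⟩
    have hq : ¬(((Ps (N+1)).coeff 0 : ℚ) = 0 ∧ ((Ps (N+1)).coeff 1 : ℚ) = 0
        ∧ ((Ps (N+1)).coeff 2 : ℚ) = 0) := by
      rintro ⟨h0, h1, h2⟩
      apply hne (N+1)
      ext k
      rcases le_or_gt 3 k with h | h
      · simp [hcoeff_hi _ _ h]
      · interval_cases k
        · simpa using h0
        · simpa using h1
        · simpa using h2
    obtain ⟨a, h0, h1, h2⟩ := prop3
      (p0 := ((Ps N).coeff 0 : ℚ)) (p1 := ((Ps N).coeff 1 : ℚ)) (p2 := ((Ps N).coeff 2 : ℚ))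
      (q0 := ((Ps (N+1)).coeff 0 : ℚ)) (q1 := ((Ps (N+1)).coeff 1 : ℚ))
      (q2 := ((Ps (N+1)).coeff 2 : ℚ))
      (by exact_mod_cast sub_eq_zero.mp (by exact_mod_cast hA0))
      (by exact_mod_cast sub_eq_zero.mp (by exact_mod_cast hB0))
      (by exact_mod_cast sub_eq_zero.mp (by exact_mod_cast hD0)) hq
    have heq : a • (Ps (N+1)).map (Int.castRingHom ℚ) = (Ps N).map (Int.castRingHom ℚ) := by
      ext k
      simp only [Polynomial.coeff_smul, Polynomial.coeff_map, smul_eq_mul, eq_intCast,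
        Int.cast_id]
      rcases le_or_gt 3 k with h | h
      · simp [hcoeff_hi _ _ h]
      · interval_cases k
        · rw [h0]
        · rw [h1]
        · rw [h2]
    have := (linearIndependent_fin2.mp (hind N)).2 a
    simp only [Matrix.cons_val_one, Matrix.head_cons, Matrix.cons_val_zero] at this
    exact this heq
  -- the endgame
  have endgame : ∀ m : ℕ → ℤ, (∀ i, |m i| ≤ htZ (Ps i)) → ∀ δ : ℝ, 0 < δ →
      (∀ i, N ≤ i → δ ≤ ‖(m (i+1) : ℂ) * aeval ξ (Ps i)
        - (m i : ℂ) * aeval ξ (Ps (i+1))‖) → False := by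
    intro m hm δ hδ hlow
    have h2 : Tendsto (fun i => 2 * ((Xs (i+1) : ℝ) * ‖aeval ξ (Ps i)‖))
        atTop (nhds 0) := by simpa using hlim.const_mul 2
    obtain ⟨i, hiN, hilt⟩ := ((eventually_ge_atTop N).and (h2.eventually_lt_const hδ)).exists
    have hmj : ∀ j, |(m j : ℝ)| ≤ (Xs j : ℝ) := by
      intro j
      have := hm j; rw [hht j] at this; exact_mod_cast this
    have hXle : (Xs i : ℝ) ≤ Xs (i+1) := by exact_mod_cast (hmono (Nat.lt_succ_self i)).le
    have habs0 : (0:ℝ) ≤ ‖aeval ξ (Ps i)‖ := norm_nonneg _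
    have habs1 : ‖aeval ξ (Ps (i+1))‖ ≤ ‖aeval ξ (Ps i)‖ := (hdec i).le
    have hup : ‖(m (i+1) : ℂ) * aeval ξ (Ps i) - (m i : ℂ) * aeval ξ (Ps (i+1))‖
        ≤ 2 * ((Xs (i+1) : ℝ) * ‖aeval ξ (Ps i)‖) := by
      calc ‖(m (i+1) : ℂ) * aeval ξ (Ps i) - (m i : ℂ) * aeval ξ (Ps (i+1))‖
          ≤ ‖(m (i+1) : ℂ) * aeval ξ (Ps i)‖
            + ‖(m i : ℂ) * aeval ξ (Ps (i+1))‖ :=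
            norm_sub_le _ _
        _ = |(m (i+1) : ℝ)| * ‖aeval ξ (Ps i)‖
            + |(m i : ℝ)| * ‖aeval ξ (Ps (i+1))‖ := by
            rw [norm_mul, norm_mul, Complex.norm_intCast, Complex.norm_intCast]
        _ ≤ 2 * ((Xs (i+1) : ℝ) * ‖aeval ξ (Ps i)‖) := by
            nlinarith [hmj i, hmj (i+1), abs_nonneg ((m i : ℝ)), abs_nonneg ((m (i+1) : ℝ)),
              norm_nonneg (aeval ξ (Ps (i+1)))]
    exact absurd (le_trans (hlow i hiN) hup) (not_le.mpr hilt)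
  -- abbreviate the N-minors
  set AN : ℤ := (Ps N).coeff 1 * (Ps (N+1)).coeff 2 - (Ps N).coeff 2 * (Ps (N+1)).coeff 1
    with hANdef
  set BN : ℤ := (Ps N).coeff 2 * (Ps (N+1)).coeff 0 - (Ps N).coeff 0 * (Ps (N+1)).coeff 2
    with hBNdef
  set DN : ℤ := (Ps N).coeff 0 * (Ps (N+1)).coeff 1 - (Ps N).coeff 1 * (Ps (N+1)).coeff 0
    with hDNdef
  have htri : AN ≠ 0 ∨ BN ≠ 0 ∨ DN ≠ 0 := by tauto
  rcases htri with h0 | h0 | h0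
  · -- AN ≠ 0, use multiplier coeff 2 and Q = BN + AN·X
    have hQne : quadP (-BN) AN 0 ≠ 0 := fun h => h0 (by
      have h1 := quadP_coeff1 (-BN) AN 0; rw [h] at h1; simpa using h1.symm)
    have hKpos : 0 < ‖aeval ξ (quadP (-BN) AN 0)‖ :=
      norm_pos_iff.mpr (hξ _ hQne (quadP_degree _ _ _))
    set K := ‖aeval ξ (quadP (-BN) AN 0)‖ with hKdef
    have hANpos : (0:ℝ) < |(AN : ℝ)| := abs_pos.mpr (Int.cast_ne_zero.mpr h0)
    refine endgame (fun i => (Ps i).coeff 2)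
      (fun i => le_trans (le_max_right _ _) (le_max_right _ _))
      (K * |(AN : ℝ)|⁻¹) (by positivity) ?_
    intro i hi
    obtain ⟨t, ht0, hA1, hB1, hD1⟩ := hpar i hi
    have ht0' : t ≠ 0 := ht0
    have hA' := congrArg (fun q : ℚ => (q : ℂ)) hA1
    have hB' := congrArg (fun q : ℚ => (q : ℂ)) hB1
    push_cast at hA' hB'
    have hexpr : ((Ps (i+1)).coeff 2 : ℂ) * aeval ξ (Ps i)
        - ((Ps i).coeff 2 : ℂ) * aeval ξ (Ps (i+1))
        = (t : ℂ) * aeval ξ (quadP (-BN) AN 0) := by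
      rw [hv i, hv (i+1), quadP_aeval]
      push_cast
      linear_combination (-1 : ℂ) * hB' + ξ * hA'
    have habs_t : ‖(t:ℂ) * aeval ξ (quadP (-BN) AN 0)‖ = |(t:ℝ)| * K := by
      rw [norm_mul]
      congr 1
      rw [show ((t:ℂ)) = (((t:ℝ) : ℝ) : ℂ) by push_cast; rfl, Complex.norm_real, Real.norm_eq_abs]
    show K * |(AN : ℝ)|⁻¹ ≤ _
    rw [hexpr, habs_t]
    have h1 := tbound hA1 h0 ht0'
    calc K * |(AN : ℝ)|⁻¹ ≤ K * |(t:ℝ)| := by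
          apply mul_le_mul_of_nonneg_left _ hKpos.le
          rw [← one_div]
          exact (div_le_iff₀ hANpos).mpr (by linarith)
      _ = |(t:ℝ)| * K := mul_comm _ _
  · -- BN ≠ 0, same combination
    have hQne : quadP (-BN) AN 0 ≠ 0 := fun h => h0 (by
      have h1 := quadP_coeff0 (-BN) AN 0; rw [h] at h1; simpa using h1.symm)
    have hKpos : 0 < ‖aeval ξ (quadP (-BN) AN 0)‖ :=
      norm_pos_iff.mpr (hξ _ hQne (quadP_degree _ _ _))
    set K := ‖aeval ξ (quadP (-BN) AN 0)‖ with hKdef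
    have hBNpos : (0:ℝ) < |(BN : ℝ)| := abs_pos.mpr (Int.cast_ne_zero.mpr h0)
    refine endgame (fun i => (Ps i).coeff 2)
      (fun i => le_trans (le_max_right _ _) (le_max_right _ _))
      (K * |(BN : ℝ)|⁻¹) (by positivity) ?_
    intro i hi
    obtain ⟨t, ht0, hA1, hB1, hD1⟩ := hpar i hi
    have ht0' : t ≠ 0 := ht0
    have hA' := congrArg (fun q : ℚ => (q : ℂ)) hA1
    have hB' := congrArg (fun q : ℚ => (q : ℂ)) hB1
    push_cast at hA' hB'
    have hexpr : ((Ps (i+1)).coeff 2 : ℂ) * aeval ξ (Ps i)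
        - ((Ps i).coeff 2 : ℂ) * aeval ξ (Ps (i+1))
        = (t : ℂ) * aeval ξ (quadP (-BN) AN 0) := by
      rw [hv i, hv (i+1), quadP_aeval]
      push_cast
      linear_combination (-1 : ℂ) * hB' + ξ * hA'
    have habs_t : ‖(t:ℂ) * aeval ξ (quadP (-BN) AN 0)‖ = |(t:ℝ)| * K := by
      rw [norm_mul]
      congr 1
      rw [show ((t:ℂ)) = (((t:ℝ) : ℝ) : ℂ) by push_cast; rfl, Complex.norm_real, Real.norm_eq_abs]
    show K * |(BN : ℝ)|⁻¹ ≤ _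
    rw [hexpr, habs_t]
    have h1 := tbound hB1 h0 ht0'
    calc K * |(BN : ℝ)|⁻¹ ≤ K * |(t:ℝ)| := by
          apply mul_le_mul_of_nonneg_left _ hKpos.le
          rw [← one_div]
          exact (div_le_iff₀ hBNpos).mpr (by linarith)
      _ = |(t:ℝ)| * K := mul_comm _ _
  · -- DN ≠ 0, use multiplier coeff 0 and Q = -DN·X + BN·X²
    have hQne : quadP 0 (-DN) BN ≠ 0 := fun h => h0 (by
      have h1 := quadP_coeff1 0 (-DN) BN; rw [h] at h1
      simpa using h1.symm)
    have hKpos : 0 < ‖aeval ξ (quadP 0 (-DN) BN)‖ :=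
      norm_pos_iff.mpr (hξ _ hQne (quadP_degree _ _ _))
    set K := ‖aeval ξ (quadP 0 (-DN) BN)‖ with hKdef
    have hDNpos : (0:ℝ) < |(DN : ℝ)| := abs_pos.mpr (Int.cast_ne_zero.mpr h0)
    refine endgame (fun i => (Ps i).coeff 0)
      (fun i => le_max_left _ _)
      (K * |(DN : ℝ)|⁻¹) (by positivity) ?_
    intro i hi
    obtain ⟨t, ht0, hA1, hB1, hD1⟩ := hpar i hi
    have ht0' : t ≠ 0 := ht0
    have hD' := congrArg (fun q : ℚ => (q : ℂ)) hD1
    have hB' := congrArg (fun q : ℚ => (q : ℂ)) hB1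
    push_cast at hD' hB'
    have hexpr : ((Ps (i+1)).coeff 0 : ℂ) * aeval ξ (Ps i)
        - ((Ps i).coeff 0 : ℂ) * aeval ξ (Ps (i+1))
        = (t : ℂ) * aeval ξ (quadP 0 (-DN) BN) := by
      rw [hv i, hv (i+1), quadP_aeval]
      push_cast
      linear_combination (-ξ) * hD' + ξ^2 * hB'
    have habs_t : ‖(t:ℂ) * aeval ξ (quadP 0 (-DN) BN)‖ = |(t:ℝ)| * K := by
      rw [norm_mul]
      congr 1
      rw [show ((t:ℂ)) = (((t:ℝ) : ℝ) : ℂ) by push_cast; rfl, Complex.norm_real, Real.norm_eq_abs]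
    show K * |(DN : ℝ)|⁻¹ ≤ _
    rw [hexpr, habs_t]
    have h1 := tbound hD1 h0 ht0'
    calc K * |(DN : ℝ)|⁻¹ ≤ K * |(t:ℝ)| := by
          apply mul_le_mul_of_nonneg_left _ hKpos.le
          rw [← one_div]
          exact (div_le_iff₀ hDNpos).mpr (by linarith)
      _ = |(t:ℝ)| * K := mul_comm _ _
end

section
/- Let ξ ∈ C, let P, Q ∈ Z[T] be nonzero polynomials of degree at most 1 that are relatively prime in Z[T] (as polynomials, i.e., their resultant is nonzero). Then 1 ≤ H(P)|Q(ξ)| + H(Q)|P(ξ)|. -/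
open Polynomial

theorem coprime_lower_bound (ξ : ℂ) (P Q : Polynomial ℤ)
    (hP0 : P ≠ 0) (hQ0 : Q ≠ 0) (hP : P.degree ≤ 1) (hQ : Q.degree ≤ 1)
    (hres : res11 P Q ≠ 0) :
    1 ≤ HZ1 P * ‖aeval ξ Q‖ + HZ1 Q * ‖aeval ξ P‖ := by
  set p0 := P.coeff 0
  set p1 := P.coeff 1
  set q0 := Q.coeff 0
  set q1 := Q.coeff 1
  have hPev : aeval ξ P = (p1 : ℂ) * ξ + (p0 : ℂ) := by
    conv_lhs => rw [P.eq_X_add_C_of_degree_le_one hP]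
    simp
    rfl
  have hQev : aeval ξ Q = (q1 : ℂ) * ξ + (q0 : ℂ) := by
    conv_lhs => rw [Q.eq_X_add_C_of_degree_le_one hQ]
    simp
    rfl
  have key : (p1 : ℂ) * aeval ξ Q - (q1 : ℂ) * aeval ξ P = ((res11 P Q : ℤ) : ℂ) := by
    rw [hPev, hQev]
    simp only [res11]
    push_cast
    ring
  have h1 : (1 : ℝ) ≤ |((res11 P Q : ℤ) : ℝ)| := by
    rw [← Int.cast_abs]
    exact_mod_cast Int.one_le_abs hres
  have h2 : ‖((res11 P Q : ℤ) : ℂ)‖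
      ≤ |(p1 : ℝ)| * ‖aeval ξ Q‖ + |(q1 : ℝ)| * ‖aeval ξ P‖ := by
    rw [← key]
    calc ‖(p1 : ℂ) * aeval ξ Q - (q1 : ℂ) * aeval ξ P‖
        ≤ ‖(p1 : ℂ) * aeval ξ Q‖ + ‖(q1 : ℂ) * aeval ξ P‖ := by
          exact norm_sub_le _ _
      _ = |(p1 : ℝ)| * ‖aeval ξ Q‖ + |(q1 : ℝ)| * ‖aeval ξ P‖ := by
          rw [norm_mul, norm_mul, Complex.norm_intCast, Complex.norm_intCast]
  have habs : ‖((res11 P Q : ℤ) : ℂ)‖ = |((res11 P Q : ℤ) : ℝ)| := by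
    exact Complex.norm_intCast _
  have hp : |(p1 : ℝ)| ≤ HZ1 P := le_max_right _ _
  have hq : |(q1 : ℝ)| ≤ HZ1 Q := le_max_right _ _
  have hQnn : (0:ℝ) ≤ ‖aeval ξ Q‖ := norm_nonneg _
  have hPnn : (0:ℝ) ≤ ‖aeval ξ P‖ := norm_nonneg _
  calc (1:ℝ) ≤ |((res11 P Q : ℤ) : ℝ)| := h1
    _ = ‖((res11 P Q : ℤ) : ℂ)‖ := habs.symm
    _ ≤ |(p1 : ℝ)| * ‖aeval ξ Q‖ + |(q1 : ℝ)| * ‖aeval ξ P‖ := h2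
    _ ≤ HZ1 P * ‖aeval ξ Q‖ + HZ1 Q * ‖aeval ξ P‖ := by
        gcongr
end

section
/- Let V be a 2-dimensional Q-vector subspace of the space of polynomials of degree ≤ 2 over Q, with basis {P, Q} of the lattice V ∩ Z[T]^{≤2}, and let ξ ∈ C with Q(ξ) ≠ 0. Suppose (P_i)_{i≥i₀} is a sequence of polynomials in V ∩ Z[T] with P_i = a_i P + b_i Q, where |a_i|, |b_i| ≤ c·H(P_i) for a constant c > 0, and P_i, P_{i+1} are linearly independent over Q for each i. Then for each i, 1 ≤ (2c/|Q(ξ)|) · H(P_{i+1}) · max(|P_i(ξ)|, |P_{i+1}(ξ)|·H(P_i)/H(P_{i+1})); in particular if |P_{i+1}(ξ)| ≤ |P_i(ξ)| and H(P_i) ≤ H(P_{i+1}), then 1 ≤ (2c/|Q(ξ)|) H(P_{i+1}) |P_i(ξ)|. -/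
open Polynomial

lemma HZ2_aux_nonneg (R : Polynomial ℤ) :
    0 ≤ max |(R.coeff 0 : ℝ)| (max |(R.coeff 1 : ℝ)| |(R.coeff 2 : ℝ)|) := by
  positivity

lemma one_le_HZ2_aux (R : Polynomial ℤ) (h0 : R ≠ 0) (hdeg : R.degree ≤ 2) :
    1 ≤ max |(R.coeff 0 : ℝ)| (max |(R.coeff 1 : ℝ)| |(R.coeff 2 : ℝ)|) := by
  have hnd : R.natDegree ≤ 2 := natDegree_le_iff_degree_le.mpr hdeg
  have hc : R.coeff R.natDegree ≠ 0 := by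
    rw [← leadingCoeff]; exact leadingCoeff_ne_zero.mpr h0
  have h1 : 1 ≤ |(R.coeff R.natDegree : ℝ)| := by
    rw [← Int.cast_abs]
    exact_mod_cast Int.one_le_abs hc
  interval_cases h : R.natDegree
  · exact le_trans h1 (le_max_left _ _)
  · exact le_trans h1 (le_max_of_le_right (le_max_left _ _))
  · exact le_trans h1 (le_max_of_le_right (le_max_right _ _))

lemma HZ2_nonneg (R : Polynomial ℤ) : 0 ≤ HZ2 R := HZ2_aux_nonneg R

lemma one_le_HZ2_s16 (R : Polynomial ℤ) (h0 : R ≠ 0) (hdeg : R.degree ≤ 2) : 1 ≤ HZ2 R :=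
  one_le_HZ2_aux R h0 hdeg

theorem dependent_sequence_lower_bound (ξ : ℂ) (P Q : Polynomial ℤ)
    (hPdeg : P.degree ≤ 2) (hQdeg : Q.degree ≤ 2)
    (hQξ : aeval ξ Q ≠ 0) (c : ℝ) (hc : 0 < c)
    (Ps : ℕ → Polynomial ℤ) (a b : ℕ → ℤ)
    (hPs : ∀ i, Ps i = a i • P + b i • Q)
    (hne : ∀ i, Ps i ≠ 0)
    (ha : ∀ i, (|a i| : ℝ) ≤ c * HZ2 (Ps i))
    (hb : ∀ i, (|b i| : ℝ) ≤ c * HZ2 (Ps i))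
    (hind : ∀ i, LinearIndependent ℚ
      ![(Ps i).map (Int.castRingHom ℚ), (Ps (i + 1)).map (Int.castRingHom ℚ)]) :
    ∀ i : ℕ,
      (1 ≤ (2 * c / ‖aeval ξ Q‖) * HZ2 (Ps (i + 1)) *
        max (‖aeval ξ (Ps i)‖)
          (‖aeval ξ (Ps (i + 1))‖ * HZ2 (Ps i) / HZ2 (Ps (i + 1)))) ∧
      (‖aeval ξ (Ps (i + 1))‖ ≤ ‖aeval ξ (Ps i)‖ →
        HZ2 (Ps i) ≤ HZ2 (Ps (i + 1)) →
        1 ≤ (2 * c / ‖aeval ξ Q‖) * HZ2 (Ps (i + 1)) *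
          ‖aeval ξ (Ps i)‖) := by
  intro i
  have hdeg : ∀ j, (Ps j).degree ≤ 2 := by
    intro j
    rw [hPs j]
    refine le_trans (degree_add_le _ _) (max_le ?_ ?_)
    · exact le_trans (degree_smul_le _ _) hPdeg
    · exact le_trans (degree_smul_le _ _) hQdeg
  set d : ℤ := a (i+1) * b i - a i * b (i+1) with hdd
  have hkeyQ : (a (i+1)) • Ps i - (a i) • Ps (i+1) = d • Q := by
    rw [hPs i, hPs (i+1), hdd]
    module
  have hkeyP : (b (i+1)) • Ps i - (b i) • Ps (i+1) = (-d) • P := by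
    rw [hPs i, hPs (i+1), hdd]
    module
  have hd : d ≠ 0 := by
    intro hd0
    have H := Fintype.linearIndependent_iff.mp (hind i)
    have hmapQ : ((a (i+1) : ℚ)) • (Ps i).map (Int.castRingHom ℚ)
        + (-(a i : ℚ)) • (Ps (i+1)).map (Int.castRingHom ℚ) = 0 := by
      have := congrArg (Polynomial.map (Int.castRingHom ℚ)) hkeyQ
      rw [hd0] at this
      simp only [zsmul_eq_mul, Polynomial.map_sub, Polynomial.map_mul,
        Polynomial.map_intCast, zero_smul, Polynomial.map_zero] at this
      rw [neg_smul, ← sub_eq_add_neg]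
      simpa [Polynomial.smul_eq_C_mul] using this
    have hmapP : ((b (i+1) : ℚ)) • (Ps i).map (Int.castRingHom ℚ)
        + (-(b i : ℚ)) • (Ps (i+1)).map (Int.castRingHom ℚ) = 0 := by
      have := congrArg (Polynomial.map (Int.castRingHom ℚ)) hkeyP
      rw [hd0] at this
      simp only [zsmul_eq_mul, Polynomial.map_sub, Polynomial.map_mul,
        Polynomial.map_intCast, neg_zero, zero_smul, Polynomial.map_zero] at this
      rw [neg_smul, ← sub_eq_add_neg]
      simpa [Polynomial.smul_eq_C_mul] using this
    have hA := H ![(a (i+1) : ℚ), -(a i : ℚ)] (by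
      simpa [Fin.sum_univ_two] using hmapQ)
    have hB := H ![(b (i+1) : ℚ), -(b i : ℚ)] (by
      simpa [Fin.sum_univ_two] using hmapP)
    have ha0 : a i = 0 := by
      have := hA 1; simp at this; exact_mod_cast this
    have hb0 : b i = 0 := by
      have := hB 1; simp at this; exact_mod_cast this
    exact hne i (by rw [hPs i, ha0, hb0]; simp)
  -- notation
  set A : ℝ := ‖aeval ξ (Ps i)‖ with hAdef
  set B : ℝ := ‖aeval ξ (Ps (i+1))‖ with hBdef
  set H0 : ℝ := HZ2 (Ps i) with hH0def
  set H1 : ℝ := HZ2 (Ps (i+1)) with hH1def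
  set q : ℝ := ‖aeval ξ Q‖ with hqdef
  have hq : 0 < q := norm_pos_iff.mpr hQξ
  have hH0 : 1 ≤ H0 := one_le_HZ2_s16 _ (hne i) (hdeg i)
  have hH1 : 1 ≤ H1 := one_le_HZ2_s16 _ (hne (i+1)) (hdeg (i+1))
  have hH1' : 0 < H1 := lt_of_lt_of_le one_pos hH1
  have hA0 : 0 ≤ A := norm_nonneg _
  have hB0 : 0 ≤ B := norm_nonneg _
  -- triangle inequality step
  have htri : (|d| : ℝ) * q ≤ (|a (i+1)| : ℝ) * A + (|a i| : ℝ) * B := by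
    have hev : (a (i+1) : ℂ) * aeval ξ (Ps i) - (a i : ℂ) * aeval ξ (Ps (i+1))
        = (d : ℂ) * aeval ξ Q := by
      have := congrArg (aeval ξ) hkeyQ
      simpa [zsmul_eq_mul] using this
    calc (|d| : ℝ) * q
        = ‖(d : ℂ) * aeval ξ Q‖ := by
          simp [hqdef, norm_mul, Complex.norm_intCast, Int.cast_abs]
      _ = ‖(a (i+1) : ℂ) * aeval ξ (Ps i)
            - (a i : ℂ) * aeval ξ (Ps (i+1))‖ := by rw [hev]
      _ ≤ ‖(a (i+1) : ℂ) * aeval ξ (Ps i)‖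
            + ‖(a i : ℂ) * aeval ξ (Ps (i+1))‖ := norm_sub_le _ _
      _ = (|a (i+1)| : ℝ) * A + (|a i| : ℝ) * B := by
          simp [hAdef, hBdef, norm_mul, Complex.norm_intCast, Int.cast_abs]
  have hd1 : (1 : ℝ) ≤ (|d| : ℝ) := by exact_mod_cast Int.one_le_abs hd
  set M : ℝ := max A (B * H0 / H1) with hMdef
  have hAM : A ≤ M := le_max_left _ _
  have hBM : B * H0 / H1 ≤ M := le_max_right _ _
  have hM0 : 0 ≤ M := le_trans hA0 hAM
  have ht : H0 * B = (B * H0 / H1) * H1 := by field_simp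
  have hmain : q ≤ 2 * c * H1 * M := by
    have h1 : q ≤ (|d| : ℝ) * q := le_mul_of_one_le_left hq.le hd1
    have h2 : (|a (i+1)| : ℝ) * A ≤ c * H1 * A :=
      mul_le_mul_of_nonneg_right (ha (i+1)) hA0
    have h3 : (|a i| : ℝ) * B ≤ c * H0 * B :=
      mul_le_mul_of_nonneg_right (ha i) hB0
    have h4 : c * H0 * B ≤ c * H1 * M := by
      rw [mul_assoc, ht]
      have := mul_le_mul_of_nonneg_left (mul_le_mul_of_nonneg_right hBM hH1'.le) hc.le
      calc c * ((B * H0 / H1) * H1) ≤ c * (M * H1) := this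
        _ = c * H1 * M := by ring
    have h5 : c * H1 * A ≤ c * H1 * M :=
      mul_le_mul_of_nonneg_left hAM (by positivity)
    linarith
  constructor
  · have heq : (2 * c / q) * H1 * M = (2 * c * H1 * M) / q := by ring
    rw [heq]
    exact (one_le_div hq).mpr hmain
  · intro hBA hH
    have hMA : M ≤ A := by
      refine max_le le_rfl ?_
      rw [div_le_iff₀ hH1']
      nlinarith
    have heq : (2 * c / q) * H1 * M = (2 * c * H1 * M) / q := by ring
    have heq2 : (2 * c / q) * H1 * A = (2 * c * H1 * A) / q := by ring
    rw [heq2]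
    refine (one_le_div hq).mpr (le_trans hmain ?_)
    have : 0 ≤ 2 * c * H1 := by positivity
    exact mul_le_mul_of_nonneg_left hMA this
end
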